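/- arXiv:1904.04587 — 11 statements merged into one kernel-verified Lean document; each statement's English description precedes it below -/
import Mathlib

section
/- Let B be an n×n real symmetric matrix with eigenvalues λ = (λ₁,...,λₙ) and spectral decomposition B = Q Diag(λ) Qᵀ for an orthogonal matrix Q, and let 1 ≤ τ ≤ n. Then Σ_{S ∈ ([n] choose τ)} I_S · Adj(B_{S×S}) · I_Sᵀ = Q · Diag(σ_{τ−1}(λ₋₁), ..., σ_{τ−1}(λ₋ₙ)) · Qᵀ, where λ₋ᵢ denotes λ with the i-th entry removed. -/
open Matrix Finset

/-- The τ×τ principal submatrix of `B` indexed by `S` (with `τ = S.card`). -/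
def principalSub {n : ℕ} (B : Matrix (Fin n) (Fin n) ℝ) (S : Finset (Fin n)) :
    Matrix (Fin S.card) (Fin S.card) ℝ :=
  B.submatrix (fun i => (S.orderIsoOfFin rfl i).1) (fun j => (S.orderIsoOfFin rfl j).1)

/-- `I_S`: the n×|S| matrix of the columns of the identity matrix indexed by `S`. -/
def colsId {n : ℕ} (S : Finset (Fin n)) : Matrix (Fin n) (Fin S.card) ℝ :=
  fun i j => if i = (S.orderIsoOfFin rfl j).1 then 1 else 0

namespace SAPSaux

variable {n : ℕ}

/-- The increasing enumeration of `S`. -/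
def emb (S : Finset (Fin n)) : Fin S.card → Fin n := S.orderEmbOfFin rfl

/-- Position of `i` in `S`. -/
def pos (S : Finset (Fin n)) (i : Fin n) (h : i ∈ S) : Fin S.card :=
  (S.orderIsoOfFin rfl).symm ⟨i, h⟩

lemma emb_pos (S : Finset (Fin n)) (i : Fin n) (h : i ∈ S) : emb S (pos S i h) = i := by
  simp [emb, pos, ← Finset.coe_orderIsoOfFin_apply]

lemma emb_mem (S : Finset (Fin n)) (a : Fin S.card) : emb S a ∈ S :=
  Finset.orderEmbOfFin_mem S rfl a

lemma emb_strictMono (S : Finset (Fin n)) : StrictMono (emb S) :=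
  (S.orderEmbOfFin rfl).strictMono

lemma emb_inj (S : Finset (Fin n)) : Function.Injective (emb S) :=
  (emb_strictMono S).injective

lemma pos_emb (S : Finset (Fin n)) (a : Fin S.card) : pos S (emb S a) (emb_mem S a) = a :=
  emb_inj S (by rw [emb_pos])

lemma principalSub_apply (B : Matrix (Fin n) (Fin n) ℝ) (S : Finset (Fin n))
    (a b : Fin S.card) : principalSub B S a b = B (emb S a) (emb S b) := by
  simp [principalSub, emb, Finset.coe_orderIsoOfFin_apply]

lemma colsId_apply (S : Finset (Fin n)) (i : Fin n) (a : Fin S.card) :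
    colsId S i a = if i = emb S a then 1 else 0 := by
  simp [colsId, emb, Finset.coe_orderIsoOfFin_apply]
  exact if_congr Iff.rfl rfl rfl

/-- summing a dite over membership. -/
lemma sum_dite_mem {M : Type*} [AddCommMonoid M] (S : Finset (Fin n)) (f : ∀ k, k ∈ S → M) :
    (∑ k, if h : k ∈ S then f k h else 0) = ∑ a : Fin S.card, f (emb S a) (emb_mem S a) := by
  rw [← Finset.sum_subset (Finset.subset_univ S) (fun k _ hk => dif_neg hk)]
  refine (Finset.sum_bij (fun (a : Fin S.card) (_ : a ∈ Finset.univ) => emb S a)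
    (fun a _ => emb_mem S a) (fun a _ b _ hab => emb_inj S hab)
    (fun k hk => ⟨pos S k hk, Finset.mem_univ _, emb_pos S k hk⟩) ?_).symm
  intro a _
  rw [dif_pos (emb_mem S a)]

lemma sum_emb (S : Finset (Fin n)) (f : Fin n → ℝ) :
    ∑ k ∈ S, f k = ∑ a : Fin S.card, f (emb S a) := by
  have h := sum_dite_mem S (fun k (_ : k ∈ S) => f k)
  rw [← h]
  simp only [dite_eq_ite, Finset.sum_ite_mem, Finset.univ_inter]

/-! ### entries of the sandwich matrices -/

lemma mul_colsId_transpose_apply (S : Finset (Fin n)) (X : Matrix (Fin n) (Fin S.card) ℝ)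
    (i j : Fin n) :
    (X * (colsId S)ᵀ) i j = if h : j ∈ S then X i (pos S j h) else 0 := by
  rw [Matrix.mul_apply]
  split_ifs with h
  · rw [Finset.sum_eq_single (pos S j h)]
    · rw [Matrix.transpose_apply, colsId_apply, emb_pos, if_pos rfl, mul_one]
    · intro c _ hc
      rw [Matrix.transpose_apply, colsId_apply, if_neg, mul_zero]
      intro e
      exact hc (emb_inj S (by rw [emb_pos, e])).symm
    · intro h'; exact absurd (Finset.mem_univ _) h'
  · apply Finset.sum_eq_zero; intro c _
    rw [Matrix.transpose_apply, colsId_apply, if_neg, mul_zero]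
    intro e; exact h (e ▸ emb_mem S c)

lemma colsId_mul_apply (S : Finset (Fin n)) (M : Matrix (Fin S.card) (Fin S.card) ℝ)
    (i : Fin n) (b : Fin S.card) :
    (colsId S * M) i b = if h : i ∈ S then M (pos S i h) b else 0 := by
  rw [Matrix.mul_apply]
  split_ifs with h
  · rw [Finset.sum_eq_single (pos S i h)]
    · rw [colsId_apply, emb_pos, if_pos rfl, one_mul]
    · intro c _ hc
      rw [colsId_apply, if_neg, zero_mul]
      intro e
      exact hc (emb_inj S (by rw [emb_pos, e])).symm
    · intro h'; exact absurd (Finset.mem_univ _) h'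
  · apply Finset.sum_eq_zero; intro c _
    rw [colsId_apply, if_neg, zero_mul]
    intro e; exact h (e ▸ emb_mem S c)

lemma sandwich_apply (S : Finset (Fin n)) (M : Matrix (Fin S.card) (Fin S.card) ℝ)
    (i j : Fin n) :
    (colsId S * M * (colsId S)ᵀ) i j
      = if h : i ∈ S ∧ j ∈ S then M (pos S i h.1) (pos S j h.2) else 0 := by
  rw [mul_colsId_transpose_apply]
  by_cases hi : i ∈ S <;> by_cases hj : j ∈ S
  · rw [dif_pos hj, colsId_mul_apply, dif_pos hi, dif_pos ⟨hi, hj⟩]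
  · rw [dif_neg hj, dif_neg (by tauto)]
  · rw [dif_pos hj, colsId_mul_apply, dif_neg hi, dif_neg (by tauto)]
  · rw [dif_neg hj, dif_neg (by tauto)]

lemma colsId_transpose_mul_apply {α : Type*} [Fintype α] (S : Finset (Fin n))
    (M : Matrix (Fin n) α ℝ) (a : Fin S.card) (j : α) :
    ((colsId S)ᵀ * M) a j = M (emb S a) j := by
  rw [Matrix.mul_apply, Finset.sum_eq_single (emb S a)]
  · rw [Matrix.transpose_apply, colsId_apply, if_pos rfl, one_mul]
  · intro c _ hc
    rw [Matrix.transpose_apply, colsId_apply, if_neg hc, zero_mul]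
  · intro h'; exact absurd (Finset.mem_univ _) h'

lemma mul_colsId_apply {α : Type*} [Fintype α] (S : Finset (Fin n))
    (M : Matrix α (Fin n) ℝ) (i : α) (b : Fin S.card) :
    (M * colsId S) i b = M i (emb S b) := by
  rw [Matrix.mul_apply, Finset.sum_eq_single (emb S b)]
  · rw [colsId_apply, if_pos rfl, mul_one]
  · intro c _ hc
    rw [colsId_apply, if_neg hc, mul_zero]
  · intro h'; exact absurd (Finset.mem_univ _) h'

lemma colsId_transpose_mul_mul (B : Matrix (Fin n) (Fin n) ℝ) (S : Finset (Fin n)) :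
    (colsId S)ᵀ * B * colsId S = principalSub B S := by
  ext a b
  rw [mul_colsId_apply, colsId_transpose_mul_apply, principalSub_apply]

/-! ### determinant lemmas -/

lemma det_updateRow_single_self {m : ℕ} (C : Matrix (Fin (m+1)) (Fin (m+1)) ℝ)
    (p : Fin (m+1)) :
    det (C.updateRow p (Pi.single p 1)) = det (C.submatrix p.succAbove p.succAbove) := by
  rw [Matrix.det_succ_row _ p, Finset.sum_eq_single p]
  · have hs : (C.updateRow p (Pi.single p (1:ℝ))).submatrix p.succAbove p.succAbove
        = C.submatrix p.succAbove p.succAbove := by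
      ext a b
      simp [Matrix.submatrix_apply, Matrix.updateRow_ne (Fin.succAbove_ne p a)]
    rw [hs, Matrix.updateRow_self, Pi.single_eq_same]
    have : (-1 : ℝ) ^ ((p : ℕ) + (p : ℕ)) = 1 := Even.neg_one_pow ⟨p, rfl⟩
    rw [this, one_mul, one_mul]
  · intro b _ hb
    rw [Matrix.updateRow_self, Pi.single_eq_of_ne hb, mul_zero, zero_mul]
  · intro h'; exact absurd (Finset.mem_univ _) h'

lemma det_updateRow_single_ne {m : ℕ} (C : Matrix (Fin (m+1)) (Fin (m+1)) ℝ)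
    {p q : Fin (m+1)} (hpq : p ≠ q) :
    det (C.updateRow q (Pi.single p 1))
      = - det ((C.updateRow q (C p)).submatrix p.succAbove p.succAbove) := by
  have h1 := det_updateRow_single_self ((C.updateRow q (C p))) p
  have hs : ((C.updateRow q (C p)).updateRow p (Pi.single p (1:ℝ))).submatrix
      p.succAbove p.succAbove = (C.updateRow q (C p)).submatrix p.succAbove p.succAbove := by
    ext a b
    simp [Matrix.submatrix_apply, Matrix.updateRow_ne (Fin.succAbove_ne p a)]
  have h2 : (C.updateRow q (C p)).updateRow p (Pi.single p (1:ℝ))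
      = (C.updateRow q (Pi.single p 1)).submatrix (Equiv.swap p q) id := by
    ext a b
    rcases eq_or_ne a p with rfl | hap
    · rw [Matrix.updateRow_self]
      rw [Matrix.submatrix_apply, Equiv.swap_apply_left, id_eq, Matrix.updateRow_self]
    · rcases eq_or_ne a q with rfl | haq
      · rw [Matrix.updateRow_ne hap, Matrix.updateRow_self]
        rw [Matrix.submatrix_apply, Equiv.swap_apply_right, id_eq,
          Matrix.updateRow_ne hpq]
      · rw [Matrix.updateRow_ne hap, Matrix.updateRow_ne haq]
        rw [Matrix.submatrix_apply, Equiv.swap_apply_of_ne_of_ne hap haq, id_eq,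
          Matrix.updateRow_ne haq]
  rw [h2] at h1
  rw [Matrix.det_permute, Equiv.Perm.sign_swap hpq] at h1
  rw [← h1]
  push_cast
  ring

lemma det_updateRow_finset_sum {k : ℕ} (M : Matrix (Fin k) (Fin k) ℝ) (c : Fin k)
    {ι : Type*} [DecidableEq ι] (s : Finset ι) (w : ι → Fin k → ℝ) :
    det (M.updateRow c (∑ a ∈ s, w a)) = ∑ a ∈ s, det (M.updateRow c (w a)) := by
  induction s using Finset.induction with
  | empty =>
    rw [Finset.sum_empty, Finset.sum_empty]
    exact Matrix.det_eq_zero_of_row_eq_zero c (fun j => by simp)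
  | insert _ _ h ih =>
    rw [Finset.sum_insert h, Finset.sum_insert h, ← ih, Matrix.det_updateRow_add]

lemma sum_mul_adjugate {k : ℕ} (M : Matrix (Fin k) (Fin k) ℝ) (c : Fin k) (v : Fin k → ℝ) :
    ∑ a, v a * adjugate M a c = det (M.updateRow c v) := by
  have hv : v = ∑ a, v a • (Pi.single a 1 : Fin k → ℝ) := by
    funext j
    simp [Pi.single_apply]
  calc ∑ a, v a * adjugate M a c
      = ∑ a, det (M.updateRow c (v a • (Pi.single a 1 : Fin k → ℝ))) := by
        refine Finset.sum_congr rfl fun a _ => ?_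
        rw [Matrix.adjugate_apply, Matrix.det_updateRow_smul]
    _ = det (M.updateRow c (∑ a, v a • (Pi.single a 1 : Fin k → ℝ))) :=
        (det_updateRow_finset_sum M c Finset.univ _).symm
    _ = det (M.updateRow c v) := by rw [← hv]

/-! ### erase bridge -/

lemma emb_erase_eq (S : Finset (Fin n)) {i : Fin n} (hi : i ∈ S)
    (h : S.card = (S.erase i).card + 1) (a : Fin (S.erase i).card) :
    emb (S.erase i) a
      = emb S (Fin.cast h.symm ((Fin.cast h (pos S i hi)).succAbove a)) := by
  have hmono : StrictMono
      (fun a : Fin (S.erase i).card =>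
        emb S (Fin.cast h.symm ((Fin.cast h (pos S i hi)).succAbove a))) := by
    intro a b hab
    apply emb_strictMono S
    have h2 := Fin.strictMono_succAbove (Fin.cast h (pos S i hi)) hab
    exact h2
  have hmem : ∀ a : Fin (S.erase i).card,
      emb S (Fin.cast h.symm ((Fin.cast h (pos S i hi)).succAbove a)) ∈ S.erase i := by
    intro a
    refine Finset.mem_erase.2 ⟨?_, emb_mem S _⟩
    intro e
    have e2 : Fin.cast h.symm ((Fin.cast h (pos S i hi)).succAbove a) = pos S i hi := by
      apply emb_inj S
      rw [emb_pos]
      exact e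
    have e3 : (Fin.cast h (pos S i hi)).succAbove a = Fin.cast h (pos S i hi) := by
      have := congrArg (Fin.cast h) e2
      simpa [Fin.ext_iff] using this
    exact Fin.succAbove_ne _ a e3
  have hu := Finset.orderEmbOfFin_unique (s := S.erase i)
      (k := (S.erase i).card) rfl hmem hmono
  exact (congrFun hu a).symm

lemma pos_erase (S : Finset (Fin n)) {i j : Fin n} (hi : i ∈ S) (hj : j ∈ S.erase i)
    (h : S.card = (S.erase i).card + 1) :
    Fin.cast h.symm ((Fin.cast h (pos S i hi)).succAbove (pos (S.erase i) j hj))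
      = pos S j (Finset.mem_of_mem_erase hj) := by
  apply emb_inj S
  rw [← emb_erase_eq S hi h, emb_pos, emb_pos]

lemma adj_principalSub_diag (B : Matrix (Fin n) (Fin n) ℝ) (S : Finset (Fin n)) {i : Fin n}
    (hi : i ∈ S) :
    adjugate (principalSub B S) (pos S i hi) (pos S i hi)
      = det (principalSub B (S.erase i)) := by
  have h : S.card = (S.erase i).card + 1 := (Finset.card_erase_add_one hi).symm
  rw [Matrix.adjugate_apply]
  rw [← Matrix.det_submatrix_equiv_self (finCongr h.symm)]
  have hcastp : (finCongr h.symm) (Fin.cast h (pos S i hi)) = pos S i hi := by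
    simp [Fin.ext_iff]
  have hsub : ((principalSub B S).updateRow (pos S i hi) (Pi.single (pos S i hi) 1)).submatrix
      (finCongr h.symm) (finCongr h.symm)
      = ((principalSub B S).submatrix (finCongr h.symm) (finCongr h.symm)).updateRow
          (Fin.cast h (pos S i hi)) (Pi.single (Fin.cast h (pos S i hi)) 1) := by
    ext a b
    rcases eq_or_ne a (Fin.cast h (pos S i hi)) with rfl | ha
    · rw [Matrix.submatrix_apply, hcastp, Matrix.updateRow_self, Matrix.updateRow_self]
      rcases eq_or_ne b (Fin.cast h (pos S i hi)) with rfl | hb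
      · rw [hcastp, Pi.single_eq_same, Pi.single_eq_same]
      · have : (finCongr h.symm) b ≠ pos S i hi := by
          intro e
          exact hb (by simp [Fin.ext_iff] at e ⊢; exact e)
        rw [Pi.single_eq_of_ne this, Pi.single_eq_of_ne hb]
    · have e2 : (finCongr h.symm) a ≠ pos S i hi := by
        intro e
        exact ha (by simp [Fin.ext_iff] at e ⊢; exact e)
      rw [Matrix.submatrix_apply, Matrix.updateRow_ne e2, Matrix.updateRow_ne ha,
        Matrix.submatrix_apply]
  rw [hsub, det_updateRow_single_self]
  congr 1
  ext a b
  rw [Matrix.submatrix_apply, Matrix.submatrix_apply, principalSub_apply, principalSub_apply,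
    emb_erase_eq S hi h a, emb_erase_eq S hi h b]
  simp only [finCongr_apply]

lemma adj_principalSub_off (B : Matrix (Fin n) (Fin n) ℝ) (S : Finset (Fin n)) {i j : Fin n}
    (hi : i ∈ S) (hj : j ∈ S) (hij : i ≠ j) :
    adjugate (principalSub B S) (pos S i hi) (pos S j hj)
      = - det ((principalSub B (S.erase i)).updateRow
          (pos (S.erase i) j (Finset.mem_erase.2 ⟨hij.symm, hj⟩))
          (fun a => B i (emb (S.erase i) a))) := by
  have h : S.card = (S.erase i).card + 1 := (Finset.card_erase_add_one hi).symm
  have hjT : j ∈ S.erase i := Finset.mem_erase.2 ⟨hij.symm, hj⟩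
  have hposne : pos S i hi ≠ pos S j hj := by
    intro e
    exact hij (by rw [← emb_pos S i hi, ← emb_pos S j hj, e])
  have hpq : Fin.cast h (pos S i hi) ≠ Fin.cast h (pos S j hj) := by
    intro e
    exact hposne (by simpa [Fin.ext_iff] using e)
  rw [Matrix.adjugate_apply]
  rw [← Matrix.det_submatrix_equiv_self (finCongr h.symm)]
  have hcastp : (finCongr h.symm) (Fin.cast h (pos S i hi)) = pos S i hi := by
    simp [Fin.ext_iff]
  have hcastq : (finCongr h.symm) (Fin.cast h (pos S j hj)) = pos S j hj := by
    simp [Fin.ext_iff]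
  have hsub : ((principalSub B S).updateRow (pos S j hj) (Pi.single (pos S i hi) 1)).submatrix
      (finCongr h.symm) (finCongr h.symm)
      = ((principalSub B S).submatrix (finCongr h.symm) (finCongr h.symm)).updateRow
          (Fin.cast h (pos S j hj)) (Pi.single (Fin.cast h (pos S i hi)) 1) := by
    ext a b
    rcases eq_or_ne a (Fin.cast h (pos S j hj)) with rfl | ha
    · rw [Matrix.submatrix_apply, hcastq, Matrix.updateRow_self, Matrix.updateRow_self]
      rcases eq_or_ne b (Fin.cast h (pos S i hi)) with rfl | hb
      · rw [hcastp, Pi.single_eq_same, Pi.single_eq_same]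
      · have : (finCongr h.symm) b ≠ pos S i hi := by
          intro e
          exact hb (by simp [Fin.ext_iff] at e ⊢; exact e)
        rw [Pi.single_eq_of_ne this, Pi.single_eq_of_ne hb]
    · have e2 : (finCongr h.symm) a ≠ pos S j hj := by
        intro e
        exact ha (by simp [Fin.ext_iff] at e ⊢; exact e)
      rw [Matrix.submatrix_apply, Matrix.updateRow_ne e2, Matrix.updateRow_ne ha,
        Matrix.submatrix_apply]
  rw [hsub, det_updateRow_single_ne _ hpq]
  congr 1
  congr 1
  ext a b
  rw [Matrix.submatrix_apply]
  rcases eq_or_ne a (pos (S.erase i) j hjT) with rfl | ha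
  · have hsq : (Fin.cast h (pos S i hi)).succAbove (pos (S.erase i) j hjT)
        = Fin.cast h (pos S j hj) := by
      have := pos_erase S hi hjT h
      have := congrArg (Fin.cast h) this
      simpa [Fin.ext_iff] using this
    rw [hsq, Matrix.updateRow_self, Matrix.updateRow_self, Matrix.submatrix_apply, hcastp,
      principalSub_apply, emb_pos, emb_erase_eq S hi h b]
    rfl
  · have hne : (Fin.cast h (pos S i hi)).succAbove a ≠ Fin.cast h (pos S j hj) := by
      intro e
      apply ha
      have : Fin.cast h.symm ((Fin.cast h (pos S i hi)).succAbove a)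
          = Fin.cast h.symm ((Fin.cast h (pos S i hi)).succAbove (pos (S.erase i) j hjT)) := by
        rw [pos_erase S hi hjT h, e]
        simp [Fin.ext_iff]
      have := congrArg (emb S) this
      rw [← emb_erase_eq S hi h, ← emb_erase_eq S hi h] at this
      exact emb_inj _ this
    rw [Matrix.updateRow_ne hne, Matrix.updateRow_ne ha, Matrix.submatrix_apply,
      principalSub_apply, principalSub_apply, emb_erase_eq S hi h a, emb_erase_eq S hi h b]
    rfl

/-! ### the matrix Phi and sum of principal minors -/

noncomputable def Phi (n τ : ℕ) (A : Matrix (Fin n) (Fin n) ℝ) : Matrix (Fin n) (Fin n) ℝ :=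
  ∑ S ∈ Finset.univ.powersetCard τ, colsId S * (principalSub A S).adjugate * (colsId S)ᵀ

noncomputable def Esym (n τ : ℕ) (A : Matrix (Fin n) (Fin n) ℝ) : ℝ :=
  ∑ T ∈ Finset.univ.powersetCard τ, det (principalSub A T)

lemma Phi_apply (τ : ℕ) (A : Matrix (Fin n) (Fin n) ℝ) (i j : Fin n) :
    Phi n τ A i j = ∑ S ∈ Finset.univ.powersetCard τ,
      (if h : i ∈ S ∧ j ∈ S then adjugate (principalSub A S) (pos S i h.1) (pos S j h.2)
        else 0) := by
  rw [Phi, Matrix.sum_apply]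
  exact Finset.sum_congr rfl fun S _ => sandwich_apply S _ i j

lemma mul_sandwich_apply (A : Matrix (Fin n) (Fin n) ℝ) (S : Finset (Fin n))
    (M : Matrix (Fin S.card) (Fin S.card) ℝ) (i j : Fin n) :
    (A * (colsId S * M * (colsId S)ᵀ)) i j
      = if h : j ∈ S then ∑ a, A i (emb S a) * M a (pos S j h) else 0 := by
  rw [Matrix.mul_apply]
  by_cases hj : j ∈ S
  · rw [dif_pos hj]
    have hterm : ∀ k, A i k * (colsId S * M * (colsId S)ᵀ) k j
        = (if h : k ∈ S then A i k * M (pos S k h) (pos S j hj) else 0) := by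
      intro k
      rw [sandwich_apply]
      by_cases hk : k ∈ S
      · rw [dif_pos ⟨hk, hj⟩, dif_pos hk]
      · rw [dif_neg (by tauto), dif_neg hk, mul_zero]
    rw [Finset.sum_congr rfl (fun k _ => hterm k), sum_dite_mem]
    refine Finset.sum_congr rfl fun a _ => ?_
    rw [pos_emb]
  · rw [dif_neg hj]
    apply Finset.sum_eq_zero
    intro k _
    rw [sandwich_apply, dif_neg (by tauto), mul_zero]

lemma mul_Phi_apply (τ : ℕ) (A : Matrix (Fin n) (Fin n) ℝ) (i j : Fin n) :
    (A * Phi n τ A) i j = ∑ T ∈ Finset.univ.powersetCard τ,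
      (if h : j ∈ T then
        det ((principalSub A T).updateRow (pos T j h) (fun a => A i (emb T a))) else 0) := by
  rw [Phi, Finset.mul_sum, Matrix.sum_apply]
  refine Finset.sum_congr rfl fun T _ => ?_
  rw [mul_sandwich_apply]
  by_cases hj : j ∈ T
  · rw [dif_pos hj, dif_pos hj, sum_mul_adjugate]
  · rw [dif_neg hj, dif_neg hj]

/-! ### the recursion -/

lemma sum_erase_bij (t : ℕ) (i : Fin n) (F : Finset (Fin n) → ℝ) :
    ∑ S ∈ (Finset.univ.powersetCard (t+1)).filter (fun S => i ∈ S), F (S.erase i)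
      = ∑ T ∈ (Finset.univ.powersetCard t).filter (fun T => i ∉ T), F T := by
  refine Finset.sum_nbij' (fun S => S.erase i) (fun T => insert i T) ?_ ?_ ?_ ?_ ?_
  · intro S hS
    obtain ⟨hS1, hS2⟩ := Finset.mem_filter.mp hS
    obtain ⟨-, hcard⟩ := Finset.mem_powersetCard.mp hS1
    refine Finset.mem_filter.mpr ⟨Finset.mem_powersetCard.mpr
      ⟨Finset.subset_univ _, ?_⟩, Finset.notMem_erase _ _⟩
    simp [Finset.card_erase_of_mem hS2, hcard]
  · intro T hT
    obtain ⟨hT1, hT2⟩ := Finset.mem_filter.mp hT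
    obtain ⟨-, hcard⟩ := Finset.mem_powersetCard.mp hT1
    refine Finset.mem_filter.mpr ⟨Finset.mem_powersetCard.mpr
      ⟨Finset.subset_univ _, ?_⟩, Finset.mem_insert_self _ _⟩
    rw [Finset.card_insert_of_notMem hT2, hcard]
  · intro S hS
    exact Finset.insert_erase (Finset.mem_filter.mp hS).2
  · intro T hT
    exact Finset.erase_insert (Finset.mem_filter.mp hT).2
  · intro S hS
    rfl

lemma R1 (τ : ℕ) (A : Matrix (Fin n) (Fin n) ℝ) :
    Phi n (τ+1) A = Esym n τ A • (1 : Matrix (Fin n) (Fin n) ℝ) - A * Phi n τ A := by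
  ext i j
  rw [Matrix.sub_apply, Matrix.smul_apply, Matrix.one_apply, Phi_apply, mul_Phi_apply]
  rcases eq_or_ne i j with rfl | hij
  · rw [if_pos rfl, smul_eq_mul, mul_one]
    have lhs_eq : ∀ S ∈ Finset.univ.powersetCard (τ+1),
        (if h : i ∈ S ∧ i ∈ S then adjugate (principalSub A S) (pos S i h.1) (pos S i h.2)
          else 0)
        = (if i ∈ S then det (principalSub A (S.erase i)) else 0) := by
      intro S _
      by_cases hS : i ∈ S
      · rw [dif_pos ⟨hS, hS⟩, if_pos hS, adj_principalSub_diag]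
      · rw [dif_neg (by tauto), if_neg hS]
    have rhs_eq : ∀ T ∈ Finset.univ.powersetCard τ,
        (if h : i ∈ T then
          det ((principalSub A T).updateRow (pos T i h) (fun a => A i (emb T a))) else 0)
        = (if i ∈ T then det (principalSub A T) else 0) := by
      intro T _
      by_cases hT : i ∈ T
      · rw [dif_pos hT, if_pos hT]
        congr 1
        have : (fun a => A i (emb T a)) = (principalSub A T) (pos T i hT) := by
          funext a
          rw [principalSub_apply, emb_pos]
        rw [this, Matrix.updateRow_eq_self]
      · rw [dif_neg hT, if_neg hT]
    rw [Finset.sum_congr rfl lhs_eq, Finset.sum_congr rfl rhs_eq]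
    rw [← Finset.sum_filter, ← Finset.sum_filter,
      sum_erase_bij τ i (fun T => det (principalSub A T)), Esym]
    rw [eq_sub_iff_add_eq, Finset.sum_filter, Finset.sum_filter, ← Finset.sum_add_distrib]
    refine Finset.sum_congr rfl fun T _ => ?_
    by_cases hT : i ∈ T <;> simp [hT]
  · rw [if_neg hij, smul_eq_mul, mul_zero, zero_sub]
    have lhs_restrict : ∑ S ∈ Finset.univ.powersetCard (τ+1),
        (if h : i ∈ S ∧ j ∈ S then adjugate (principalSub A S) (pos S i h.1) (pos S j h.2)
          else 0)
        = ∑ S ∈ (Finset.univ.powersetCard (τ+1)).filter (fun S => i ∈ S ∧ j ∈ S),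
            (if h : i ∈ S ∧ j ∈ S then adjugate (principalSub A S) (pos S i h.1) (pos S j h.2)
              else 0) :=
      (Finset.sum_subset (Finset.filter_subset _ _) (fun S _ hS' => dif_neg
        (fun h => hS' (Finset.mem_filter.mpr ⟨by assumption, h⟩)))).symm
    have rhs_restrict : ∑ T ∈ Finset.univ.powersetCard τ,
        (if h : j ∈ T then
          det ((principalSub A T).updateRow (pos T j h) (fun a => A i (emb T a))) else 0)
        = ∑ T ∈ (Finset.univ.powersetCard τ).filter (fun T => j ∈ T ∧ i ∉ T),
            (if h : j ∈ T then
              det ((principalSub A T).updateRow (pos T j h) (fun a => A i (emb T a)))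
                else 0) := by
      refine (Finset.sum_subset (Finset.filter_subset _ _) ?_).symm
      intro T hT hT'
      by_cases hjT : j ∈ T
      · have hiT : i ∈ T := by
          by_contra hiT
          exact hT' (Finset.mem_filter.mpr ⟨hT, hjT, hiT⟩)
        rw [dif_pos hjT]
        have hne : pos T i hiT ≠ pos T j hjT := by
          intro e
          exact hij (by rw [← emb_pos T i hiT, ← emb_pos T j hjT, e])
        apply Matrix.det_zero_of_row_eq hne
        have hrow : ((principalSub A T).updateRow (pos T j hjT)
            (fun a => A i (emb T a))) (pos T i hiT) = fun a => A i (emb T a) := by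
          rw [Matrix.updateRow_ne hne]
          funext a
          rw [principalSub_apply, emb_pos]
        rw [hrow, Matrix.updateRow_self]
      · exact dif_neg hjT
    rw [lhs_restrict, rhs_restrict, ← Finset.sum_neg_distrib]
    refine Finset.sum_nbij' (fun S => S.erase i) (fun T => insert i T) ?_ ?_ ?_ ?_ ?_
    · intro S hS
      obtain ⟨hS1, hiS, hjS⟩ := Finset.mem_filter.mp hS
      obtain ⟨-, hcard⟩ := Finset.mem_powersetCard.mp hS1
      refine Finset.mem_filter.mpr ⟨Finset.mem_powersetCard.mpr
        ⟨Finset.subset_univ _, ?_⟩, Finset.mem_erase.mpr ⟨hij.symm, hjS⟩,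
          Finset.notMem_erase _ _⟩
      simp [Finset.card_erase_of_mem hiS, hcard]
    · intro T hT
      obtain ⟨hT1, hjT, hiT⟩ := Finset.mem_filter.mp hT
      obtain ⟨-, hcard⟩ := Finset.mem_powersetCard.mp hT1
      refine Finset.mem_filter.mpr ⟨Finset.mem_powersetCard.mpr
        ⟨Finset.subset_univ _, ?_⟩, Finset.mem_insert_self _ _,
          Finset.mem_insert_of_mem hjT⟩
      rw [Finset.card_insert_of_notMem hiT, hcard]
    · intro S hS
      exact Finset.insert_erase (Finset.mem_filter.mp hS).2.1
    · intro T hT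
      exact Finset.erase_insert (Finset.mem_filter.mp hT).2.2
    · intro S hS
      obtain ⟨hS1, hiS, hjS⟩ := Finset.mem_filter.mp hS
      have hjT : j ∈ S.erase i := Finset.mem_erase.mpr ⟨hij.symm, hjS⟩
      rw [dif_pos ⟨hiS, hjS⟩, dif_pos hjT, adj_principalSub_off A S hiS hjS hij]

/-! ### trace computation -/

lemma trace_sandwich (B : Matrix (Fin n) (Fin n) ℝ) (S : Finset (Fin n)) :
    trace (B * (colsId S * (principalSub B S).adjugate * (colsId S)ᵀ))
      = (S.card : ℝ) * det (principalSub B S) := by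
  have h1 : B * (colsId S * (principalSub B S).adjugate * (colsId S)ᵀ)
      = (B * colsId S * (principalSub B S).adjugate) * (colsId S)ᵀ := by
    simp only [← Matrix.mul_assoc]
  rw [h1, Matrix.trace_mul_comm]
  have h2 : (colsId S)ᵀ * (B * colsId S * (principalSub B S).adjugate)
      = principalSub B S * (principalSub B S).adjugate := by
    simp only [← Matrix.mul_assoc]
    rw [colsId_transpose_mul_mul]
  rw [h2, Matrix.mul_adjugate, Matrix.trace_smul, Matrix.trace_one]
  simp [mul_comm]

/-! ### symmetric function combinatorics -/

lemma powersetCard_erase (t : ℕ) (i : Fin n) :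
    (Finset.univ.erase i).powersetCard t
      = (Finset.univ.powersetCard t).filter (fun T => i ∉ T) := by
  ext T
  simp only [Finset.mem_powersetCard, Finset.mem_filter, Finset.subset_erase]
  tauto

lemma sum_prod_insert (t : ℕ) (i : Fin n) (lam : Fin n → ℝ) :
    ∑ U ∈ (Finset.univ.powersetCard (t+1)).filter (fun U => i ∈ U), ∏ j ∈ U, lam j
      = lam i * ∑ T ∈ (Finset.univ.erase i).powersetCard t, ∏ j ∈ T, lam j := by
  rw [Finset.mul_sum]
  refine Finset.sum_nbij' (fun U => U.erase i) (fun T => insert i T) ?_ ?_ ?_ ?_ ?_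
  · intro U hU
    obtain ⟨hU1, hiU⟩ := Finset.mem_filter.mp hU
    obtain ⟨-, hcard⟩ := Finset.mem_powersetCard.mp hU1
    refine Finset.mem_powersetCard.mpr ⟨?_, by simp [Finset.card_erase_of_mem hiU, hcard]⟩
    exact Finset.erase_subset_erase i (Finset.subset_univ U)
  · intro T hT
    obtain ⟨hsub, hcard⟩ := Finset.mem_powersetCard.mp hT
    have hiT : i ∉ T := fun hmem => (Finset.mem_erase.mp (hsub hmem)).1 rfl
    exact Finset.mem_filter.mpr ⟨Finset.mem_powersetCard.mpr ⟨Finset.subset_univ _, by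
      simp [Finset.card_insert_of_notMem hiT, hcard]⟩, Finset.mem_insert_self _ _⟩
  · intro U hU
    exact Finset.insert_erase (Finset.mem_filter.mp hU).2
  · intro T hT
    obtain ⟨hsub, -⟩ := Finset.mem_powersetCard.mp hT
    exact Finset.erase_insert (fun hmem => (Finset.mem_erase.mp (hsub hmem)).1 rfl)
  · intro U hU
    obtain ⟨-, hiU⟩ := Finset.mem_filter.mp hU
    exact (Finset.mul_prod_erase U lam hiU).symm

lemma sum_lam_esym (t : ℕ) (lam : Fin n → ℝ) :
    ∑ i, lam i * (∑ T ∈ (Finset.univ.erase i).powersetCard t, ∏ j ∈ T, lam j)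
      = ((t:ℝ)+1) * ∑ U ∈ Finset.univ.powersetCard (t+1), ∏ j ∈ U, lam j := by
  have h1 : ∀ i : Fin n, lam i * (∑ T ∈ (Finset.univ.erase i).powersetCard t, ∏ j ∈ T, lam j)
      = ∑ U ∈ (Finset.univ.powersetCard (t+1)).filter (fun U => i ∈ U), ∏ j ∈ U, lam j :=
    fun i => (sum_prod_insert t i lam).symm
  rw [Finset.sum_congr rfl (fun i _ => h1 i)]
  simp_rw [Finset.sum_filter]
  rw [Finset.sum_comm]
  have h2 : ∀ U ∈ Finset.univ.powersetCard (t+1),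
      (∑ i : Fin n, if i ∈ U then ∏ j ∈ U, lam j else 0)
        = ((t:ℝ)+1) * ∏ j ∈ U, lam j := by
    intro U hU
    rw [Finset.sum_ite_mem, Finset.univ_inter, Finset.sum_const,
      (Finset.mem_powersetCard.mp hU).2, nsmul_eq_mul]
    push_cast
    ring
  rw [Finset.sum_congr rfl h2, ← Finset.mul_sum]

lemma esym_erase_rec (t : ℕ) (i : Fin n) (lam : Fin n → ℝ) :
    ∑ T ∈ (Finset.univ.erase i).powersetCard (t+1), ∏ j ∈ T, lam j
      = (∑ U ∈ Finset.univ.powersetCard (t+1), ∏ j ∈ U, lam j)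
        - lam i * ∑ T ∈ (Finset.univ.erase i).powersetCard t, ∏ j ∈ T, lam j := by
  rw [← sum_prod_insert t i lam, eq_sub_iff_add_eq, powersetCard_erase, add_comm]
  exact Finset.sum_filter_add_sum_filter_not _ _ _

/-! ### main induction -/

lemma aux (B Q : Matrix (Fin n) (Fin n) ℝ) (lam : Fin n → ℝ)
    (hQ : Q * Qᵀ = 1) (hdecomp : B = Q * Matrix.diagonal lam * Qᵀ) :
    ∀ τ : ℕ, 1 ≤ τ → τ ≤ n →
      Phi n τ B = Q * Matrix.diagonal (fun i : Fin n =>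
        ∑ T ∈ (Finset.univ.erase i).powersetCard (τ - 1), ∏ j ∈ T, lam j) * Qᵀ := by
  have hQ' : Qᵀ * Q = 1 := mul_eq_one_comm.mp hQ
  have hconj : ∀ M N : Matrix (Fin n) (Fin n) ℝ,
      (Q * M * Qᵀ) * (Q * N * Qᵀ) = Q * (M * N) * Qᵀ := by
    intro M N
    calc (Q * M * Qᵀ) * (Q * N * Qᵀ) = Q * (M * ((Qᵀ * Q) * (N * Qᵀ))) := by
          simp only [Matrix.mul_assoc]
      _ = Q * (M * N) * Qᵀ := by
          rw [hQ', Matrix.one_mul]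
          simp only [← Matrix.mul_assoc]
  have htr : ∀ M : Matrix (Fin n) (Fin n) ℝ, trace (Q * M * Qᵀ) = trace M := by
    intro M
    rw [Matrix.trace_mul_comm (Q * M) Qᵀ, ← Matrix.mul_assoc, hQ', Matrix.one_mul]
  intro τ
  induction τ with
  | zero => intro h; exact absurd h (by omega)
  | succ t ih =>
    intro _ hτn
    rcases Nat.eq_zero_or_pos t with rfl | ht
    · -- τ = 1
      have hE : Esym n 0 B = 1 := by
        rw [Esym, Finset.powersetCard_zero, Finset.sum_singleton]
        have : IsEmpty (Fin (∅ : Finset (Fin n)).card) := by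
          rw [Finset.card_empty]; infer_instance
        exact Matrix.det_isEmpty
      have hP0 : Phi n 0 B = 0 := by
        rw [Phi, Finset.powersetCard_zero, Finset.sum_singleton]
        ext i j
        rw [sandwich_apply]
        simp
      rw [R1 0 B, hE, hP0, Matrix.mul_zero, sub_zero, one_smul]
      have hg : (fun i : Fin n =>
          ∑ T ∈ ((Finset.univ.erase i).powersetCard (0 + 1 - 1)), ∏ j ∈ T, lam j)
          = fun _ => (1:ℝ) := by
        funext i
        simp
      rw [hg, Matrix.diagonal_one, Matrix.mul_one, hQ]
    · obtain ⟨s, rfl⟩ : ∃ s, t = s + 1 := ⟨t - 1, by omega⟩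
      have iht := ih (by omega) (by omega)
      have iht' : Phi n (s+1) B = Q * Matrix.diagonal (fun i : Fin n =>
          ∑ T ∈ ((Finset.univ.erase i).powersetCard s), ∏ j ∈ T, lam j) * Qᵀ := by
        rw [iht]
        simp only [Nat.add_sub_cancel]
      have htrace1 : trace (B * Phi n (s+1) B) = ((s:ℝ)+1) * Esym n (s+1) B := by
        rw [Phi, Finset.mul_sum, Matrix.trace_sum, Esym, Finset.mul_sum]
        refine Finset.sum_congr rfl fun S hS => ?_
        rw [trace_sandwich]
        have hc : ((S.card : ℕ) : ℝ) = (s:ℝ)+1 := by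
          rw [(Finset.mem_powersetCard.mp hS).2]
          push_cast
          ring
        rw [hc]
      have htrace2 : trace (B * Phi n (s+1) B)
          = ∑ i, lam i * (∑ T ∈ ((Finset.univ.erase i).powersetCard s), ∏ j ∈ T, lam j) := by
        rw [iht']
        rw [hdecomp, hconj, Matrix.diagonal_mul_diagonal, htr, Matrix.trace_diagonal]
      have hEt : Esym n (s+1) B = ∑ U ∈ Finset.univ.powersetCard (s+1), ∏ j ∈ U, lam j := by
        have hcomb := htrace1.symm.trans htrace2
        rw [sum_lam_esym s lam] at hcomb
        exact mul_left_cancel₀ (by positivity) hcomb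
      have hgnew : (fun i : Fin n =>
          ∑ T ∈ ((Finset.univ.erase i).powersetCard (s + 1 + 1 - 1)), ∏ j ∈ T, lam j)
          = fun i => Esym n (s+1) B - lam i *
              ∑ T ∈ ((Finset.univ.erase i).powersetCard s), ∏ j ∈ T, lam j := by
        funext i
        rw [hEt]
        exact esym_erase_rec s i lam
      rw [R1 (s+1) B, iht']
      rw [hdecomp, hconj, Matrix.diagonal_mul_diagonal, hgnew]
      have hsplit : Matrix.diagonal (fun i : Fin n => Esym n (s+1) B - lam i *
            ∑ T ∈ ((Finset.univ.erase i).powersetCard s), ∏ j ∈ T, lam j)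
          = Esym n (s+1) B • (1 : Matrix (Fin n) (Fin n) ℝ)
            - Matrix.diagonal (fun i : Fin n => lam i *
                ∑ T ∈ ((Finset.univ.erase i).powersetCard s), ∏ j ∈ T, lam j) := by
        rw [Matrix.smul_one_eq_diagonal, ← Matrix.diagonal_sub]
      rw [hsplit, Matrix.mul_sub, Matrix.sub_mul]
      have hconst : Q * (Esym n (s+1) B • (1 : Matrix (Fin n) (Fin n) ℝ)) * Qᵀ
          = Esym n (s+1) B • (1 : Matrix (Fin n) (Fin n) ℝ) := by
        rw [Matrix.mul_smul, Matrix.mul_one, Matrix.smul_mul, hQ]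
      rw [hconst, ← hdecomp]

end SAPSaux

/-- the sum of `I_S ⬝ Adj(B_{S×S}) ⬝ I_Sᵀ` over all τ-element subsets `S`
equals `Q ⬝ Diag(σ_{τ-1}(λ₋₁), …, σ_{τ-1}(λ₋ₙ)) ⬝ Qᵀ`. -/
theorem sum_adjugates_principal_submatrices (n τ : ℕ) (hτ1 : 1 ≤ τ) (hτn : τ ≤ n)
    (B Q : Matrix (Fin n) (Fin n) ℝ) (lam : Fin n → ℝ)
    (hsymm : B.IsSymm) (hQ : Q * Qᵀ = 1)
    (hmono : ∀ i j : Fin n, i ≤ j → lam j ≤ lam i)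
    (hdecomp : B = Q * Matrix.diagonal lam * Qᵀ) :
    ∑ S ∈ Finset.univ.powersetCard τ,
        colsId S * (principalSub B S).adjugate * (colsId S)ᵀ
      = Q * Matrix.diagonal (fun i : Fin n =>
          ∑ T ∈ (Finset.univ.erase i).powersetCard (τ - 1), ∏ j ∈ T, lam j) * Qᵀ := by
  exact SAPSaux.aux B Q lam hQ hdecomp τ hτ1 hτn
end

section
/- Let B be an n×n real symmetric matrix with n ≥ 2, and define the matrix-valued polynomial P(t) := Adj(B − tI). Then for all t ∈ ℝ, P'(t) = −Σ_{i=1}^n I_{−i} · Adj(B_{−i×−i} − tI) · I_{−i}ᵀ, where B_{−i×−i} is the (n−1)×(n−1) submatrix of B obtained by deleting the i-th row and column, and I_{−i} is the n×(n−1) matrix obtained from the identity by deleting the i-th column. -/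
open Matrix Finset
open Polynomial

/-- `I_{-i}`: the (n+1)×n matrix obtained from the identity by deleting the i-th column. -/
def delCol {n : ℕ} (i : Fin (n + 1)) : Matrix (Fin (n + 1)) (Fin n) ℝ :=
  fun p q => if p = i.succAbove q then 1 else 0



private lemma deriv_prod_finset {ι : Type*} [DecidableEq ι] (s : Finset ι) (f : ι → Polynomial ℝ) :
    derivative (∏ i ∈ s, f i) = ∑ i ∈ s, (∏ j ∈ s.erase i, f j) * derivative (f i) := by
  induction s using Finset.induction_on with
  | empty => simp
  | @insert a s ha ih =>
    rw [Finset.prod_insert ha, derivative_mul, ih, Finset.sum_insert ha, Finset.erase_insert ha,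
      Finset.mul_sum]
    refine congrArg₂ (· + ·) (mul_comm _ _) (Finset.sum_congr rfl fun i hi => ?_)
    rw [Finset.erase_insert_of_ne (fun h : a = i => ha (h ▸ hi)),
      Finset.prod_insert (fun h => ha (Finset.mem_of_mem_erase h)), mul_assoc]

private lemma derivative_det_col {m : ℕ} (M : Matrix (Fin m) (Fin m) (Polynomial ℝ)) :
    derivative M.det = ∑ i, (M.updateCol i fun j => derivative (M j i)).det := by
  rw [det_apply', map_sum]
  have h1 : ∀ σ : Equiv.Perm (Fin m),
      derivative (((Equiv.Perm.sign σ : ℤ) : Polynomial ℝ) * ∏ i, M (σ i) i)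
      = ∑ i, ((Equiv.Perm.sign σ : ℤ) : Polynomial ℝ) *
          ((∏ j ∈ Finset.univ.erase i, M (σ j) j) * derivative (M (σ i) i)) := by
    intro σ
    rw [derivative_intCast_mul, deriv_prod_finset, Finset.mul_sum]
  simp_rw [h1]
  rw [Finset.sum_comm]
  refine Finset.sum_congr rfl fun i _ => ?_
  rw [det_apply']
  refine Finset.sum_congr rfl fun σ _ => ?_
  rw [← Finset.mul_prod_erase Finset.univ _ (Finset.mem_univ i), updateCol_self]
  have : ∏ j ∈ Finset.univ.erase i, (M.updateCol i fun j => derivative (M j i)) (σ j) j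
      = ∏ j ∈ Finset.univ.erase i, M (σ j) j :=
    Finset.prod_congr rfl fun j hj => updateCol_ne (Finset.ne_of_mem_erase hj)
  rw [this]
  ring

private lemma derivative_det_row {m : ℕ} (M : Matrix (Fin m) (Fin m) (Polynomial ℝ)) :
    derivative M.det = ∑ i, (M.updateRow i fun j => derivative (M i j)).det := by
  rw [← det_transpose, derivative_det_col]
  refine Finset.sum_congr rfl fun i _ => ?_
  rw [← det_transpose (M.updateRow i _)]
  congr 1
  ext r c
  by_cases h : c = i <;>
    simp [updateRow_apply, updateCol_apply, transpose_apply, h]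

private lemma term_eq (n : ℕ) (B : Matrix (Fin (n + 1)) (Fin (n + 1)) ℝ) (t : ℝ)
    (a b k : Fin (n + 1)) :
    det (((((B.map C - (X : Polynomial ℝ) • 1).updateRow b (Pi.single a 1)).updateRow k
        (fun j => derivative (((B.map C - (X : Polynomial ℝ) • 1).updateRow b (Pi.single a 1)) k j))).map
        (eval t)))
      = -((delCol k * ((B.submatrix k.succAbove k.succAbove) - t • 1).adjugate * (delCol k)ᵀ) a b) := by
  classical
  set Mp : Matrix (Fin (n + 1)) (Fin (n + 1)) (Polynomial ℝ) := B.map C - (X : Polynomial ℝ) • 1 with hMp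
  by_cases hkb : k = b
  · -- row k = b is constant, derivative row is zero; RHS entry is 0
    subst hkb
    rw [det_eq_zero_of_row_eq_zero k (fun j => ?_), eq_comm, neg_eq_zero]
    · -- RHS entry is 0
      rw [mul_apply]
      refine Finset.sum_eq_zero fun q _ => ?_
      have : (delCol k)ᵀ q k = 0 := by
        simp [delCol, transpose_apply, (Fin.succAbove_ne k q).symm]
      rw [this, mul_zero]
    · simp [updateRow_self, Pi.single_apply, apply_ite derivative]
  · -- k ≠ b
    set G : Matrix (Fin (n + 1)) (Fin (n + 1)) ℝ := (B - t • 1).updateRow b (Pi.single a 1) with hG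
    have hsingle : ∀ (x c : Fin (n + 1)), eval t ((Pi.single x 1 : Fin (n + 1) → Polynomial ℝ) c)
        = (Pi.single x 1 : Fin (n + 1) → ℝ) c := by
      intro x c
      by_cases h : c = x <;> simp [Pi.single_apply, h]
    have hF : ((Mp.updateRow b (Pi.single a 1)).updateRow k
        (fun j => derivative ((Mp.updateRow b (Pi.single a 1)) k j))).map (eval t)
        = G.updateRow k ((-1 : ℝ) • (Pi.single k 1 : Fin (n + 1) → ℝ)) := by
      ext r c
      by_cases hr : r = k
      · obtain rfl := hr
        rw [map_apply, updateRow_self, updateRow_self, updateRow_ne hkb]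
        by_cases hc : r = c
        · obtain rfl := hc
          simp [hMp, one_apply_eq, Pi.single_eq_same]
        · have hc' : ¬ c = r := fun h => hc h.symm
          simp [hMp, one_apply, hc, Pi.single_apply, hc']
      · rw [map_apply, updateRow_ne hr, updateRow_ne hr, hG]
        by_cases hb : r = b
        · obtain rfl := hb
          rw [updateRow_self, updateRow_self, hsingle]
        · rw [updateRow_ne hb, updateRow_ne hb]
          by_cases hc : r = c <;> simp [hMp, one_apply, hc]
    rw [hF, det_updateRow_smul, neg_one_mul, neg_inj]
    by_cases hka : k = a
    · -- rows a and b of the updated matrix coincide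
      obtain rfl := hka
      have h0 : det (G.updateRow k (Pi.single k 1)) = 0 := by
        refine det_zero_of_row_eq hkb ?_
        rw [updateRow_self, updateRow_ne (Ne.symm hkb), hG, updateRow_self]
      rw [h0, eq_comm, mul_apply]
      refine Finset.sum_eq_zero fun q _ => ?_
      rw [mul_apply]
      have h1 : ∀ p, delCol k k p = 0 := fun p => by
        simp [delCol, (Fin.succAbove_ne k p).symm]
      simp [h1]
    · -- main case : k ≠ a, k ≠ b
      obtain ⟨p, hp⟩ := Fin.exists_succAbove_eq (Ne.symm hka)
      obtain ⟨q, hq⟩ := Fin.exists_succAbove_eq (Ne.symm hkb)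
      set A : Matrix (Fin (n + 1)) (Fin (n + 1)) ℝ := G.updateRow k (Pi.single k 1) with hA
      have expand : det A = det (A.submatrix k.succAbove k.succAbove) := by
        rw [det_succ_row A k, Fintype.sum_eq_single k (fun j hjk => ?_)]
        · rw [hA, updateRow_self, Pi.single_eq_same, mul_one,
            Even.neg_one_pow ⟨(k : ℕ), rfl⟩, one_mul]
        · rw [hA, updateRow_self, Pi.single_eq_of_ne hjk, mul_zero, zero_mul]
      have hsub : A.submatrix k.succAbove k.succAbove
          = ((B.submatrix k.succAbove k.succAbove) - t • 1).updateRow q (Pi.single p 1) := by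
        ext r c
        rw [submatrix_apply, hA, updateRow_ne (Fin.succAbove_ne k r)]
        by_cases hrq : r = q
        · obtain rfl := hrq
          rw [hq, hG, updateRow_self, updateRow_self]
          by_cases hcp : c = p
          · obtain rfl := hcp
            rw [hp, Pi.single_eq_same, Pi.single_eq_same]
          · rw [Pi.single_eq_of_ne hcp, Pi.single_eq_of_ne]
            rw [← hp]
            exact fun h => hcp (Fin.succAbove_right_injective h)
        · have hrb : k.succAbove r ≠ b := fun h => hrq (by
            apply Fin.succAbove_right_injective (p := k); rw [h, hq])
          rw [hG, updateRow_ne hrb, updateRow_ne hrq]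
          simp only [Matrix.sub_apply, Matrix.smul_apply, submatrix_apply, one_apply, smul_eq_mul]
          congr 2
          simp [Fin.succAbove_right_injective.eq_iff]
      rw [expand, hsub, ← adjugate_apply, mul_apply]
      rw [Fintype.sum_eq_single q (fun y hy => ?_)]
      · have hd : (delCol k)ᵀ q b = 1 := by simp [delCol, transpose_apply, hq]
        rw [hd, mul_one, mul_apply, Fintype.sum_eq_single p (fun x hx => ?_)]
        · have h1 : delCol k a p = 1 := by simp [delCol, hp]
          rw [h1, one_mul]
        · have h0 : delCol k a x = 0 := by
            simp only [delCol, ite_eq_right_iff]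
            intro h
            exact absurd (Fin.succAbove_right_injective (hp.trans h)) (Ne.symm hx)
          rw [h0, zero_mul]
      · have h0 : (delCol k)ᵀ y b = 0 := by
          simp only [delCol, transpose_apply, ite_eq_right_iff]
          intro h
          exact absurd (Fin.succAbove_right_injective (hq.trans h)) (Ne.symm hy)
        rw [h0, mul_zero]

/-- entrywise derivative of P(t) = Adj(B - t I):
P'(t) = -∑ᵢ I₋ᵢ Adj(B₋ᵢ,₋ᵢ - t I) I₋ᵢᵀ. (Dimension n+1 ≥ 2.) -/
theorem deriv_adjugate_sub_smul_one (n : ℕ) (hn : 1 ≤ n)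
    (B : Matrix (Fin (n + 1)) (Fin (n + 1)) ℝ) (hsymm : B.IsSymm)
    (t : ℝ) (a b : Fin (n + 1)) :
    HasDerivAt (fun s : ℝ => (B - s • 1).adjugate a b)
      ((-(∑ i : Fin (n + 1),
          delCol i * ((B.submatrix i.succAbove i.succAbove) - t • 1).adjugate * (delCol i)ᵀ))
        a b) t := by
  classical
  have hmapMp : ∀ s : ℝ,
      (B.map C - (X : Polynomial ℝ) • 1).map (eval s) = B - s • 1 := by
    intro s
    ext i j
    by_cases h : i = j <;> simp [one_apply, h]
  have hA : ∀ s : ℝ, (B - s • 1).adjugate a b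
      = ((B.map C - (X : Polynomial ℝ) • 1).adjugate a b).eval s := by
    intro s
    have h2 := (evalRingHom s).map_adjugate (B.map C - (X : Polynomial ℝ) • 1)
    rw [RingHom.mapMatrix_apply, RingHom.mapMatrix_apply, coe_evalRingHom, hmapMp s] at h2
    rw [← h2, map_apply]
  have heq : (fun s : ℝ => (B - s • 1).adjugate a b)
      = fun s => ((B.map C - (X : Polynomial ℝ) • 1).adjugate a b).eval s := funext hA
  rw [heq]
  have hval : (derivative ((B.map C - (X : Polynomial ℝ) • 1).adjugate a b)).eval t
      = (-(∑ i : Fin (n + 1),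
          delCol i * ((B.submatrix i.succAbove i.succAbove) - t • 1).adjugate * (delCol i)ᵀ))
        a b := by
    rw [adjugate_apply, derivative_det_row, eval_finset_sum, neg_apply, Matrix.sum_apply,
      ← Finset.sum_neg_distrib]
    refine Finset.sum_congr rfl fun k _ => ?_
    rw [← coe_evalRingHom, RingHom.map_det, RingHom.mapMatrix_apply, coe_evalRingHom]
    exact term_eq n B t a b k
  exact hval ▸ ((B.map C - (X : Polynomial ℝ) • 1).adjugate a b).hasDerivAt t
end

section
/- Let B be an n×n real symmetric matrix with n ≥ 2 and define P(t) := Adj(B − tI). Then for all 0 ≤ r ≤ n−1 and all t ∈ ℝ, the r-th derivative satisfies P^{(r)}(t) = (−1)^r · r! · Σ_{S ∈ ([n] choose r)} I_{−S} · Adj(B_{−S×−S} − tI) · I_{−S}ᵀ. -/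
open Matrix Finset

section Aux

variable {n : ℕ}

/-- Auxiliary matrix: rows in `S` are set to the corresponding standard basis rows,
row `b` is set to `e_a`, and the other rows are the rows of `B - s•1`. -/
def NN (B : Matrix (Fin n) (Fin n) ℝ) (a b : Fin n) (S : Finset (Fin n)) (s : ℝ) :
    Matrix (Fin n) (Fin n) ℝ :=
  fun i j => if i ∈ S then (if j = i then 1 else 0)
    else ((B - s • 1).updateRow b (Pi.single a 1)) i j

def FF (B : Matrix (Fin n) (Fin n) ℝ) (a b : Fin n) (S : Finset (Fin n)) : ℝ → ℝ :=
  fun s => (NN B a b S s).det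

/-- Entrywise derivative of `NN` in `s`. -/
def DD (b : Fin n) (S : Finset (Fin n)) : Fin n → Fin n → ℝ :=
  fun i j => if i ∈ S then 0 else if i = b then 0 else -(if i = j then 1 else 0)

lemma hasDerivAt_NN (B : Matrix (Fin n) (Fin n) ℝ) (a b : Fin n) (S : Finset (Fin n))
    (i j : Fin n) (x : ℝ) :
    HasDerivAt (fun s => NN B a b S s i j) (DD b S i j) x := by
  unfold NN DD
  by_cases hiS : i ∈ S
  · simp only [hiS, if_true]; exact hasDerivAt_const _ _
  · simp only [hiS, if_false, Matrix.updateRow_apply]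
    by_cases hib : i = b
    · simp only [hib, if_true, if_pos rfl]; exact hasDerivAt_const _ _
    · simp only [hib, if_false, Matrix.sub_apply, Matrix.smul_apply, smul_eq_mul]
      have h : HasDerivAt (fun s : ℝ => B i j - s * (1 : Matrix (Fin n) (Fin n) ℝ) i j)
          (-(1 : Matrix (Fin n) (Fin n) ℝ) i j) x := by
        simpa using
          ((hasDerivAt_id x).mul_const ((1 : Matrix (Fin n) (Fin n) ℝ) i j)).const_sub (B i j)
      simpa [Matrix.one_apply] using h

lemma NN_insert_same (B : Matrix (Fin n) (Fin n) ℝ) (a b : Fin n) (S : Finset (Fin n))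
    (s : ℝ) (k j : Fin n) :
    NN B a b (insert k S) s k j = if j = k then 1 else 0 := by
  simp [NN]

lemma NN_insert_other (B : Matrix (Fin n) (Fin n) ℝ) (a b : Fin n) (S : Finset (Fin n))
    (s : ℝ) {k i : Fin n} (h : i ≠ k) (j : Fin n) :
    NN B a b (insert k S) s i j = NN B a b S s i j := by
  simp [NN, Finset.mem_insert, h]

lemma DD_zero (b : Fin n) (S : Finset (Fin n)) {i j : Fin n} (h : ¬ (i = j ∧ j ∉ insert b S)) :
    DD b S i j = 0 := by
  unfold DD
  by_cases h1 : i ∈ S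
  · simp [h1]
  · by_cases h2 : i = b
    · simp [h1, h2]
    · simp only [h1, if_false, h2, if_false, neg_eq_zero, ite_eq_right_iff, one_ne_zero]
      intro hij
      exfalso; exact h ⟨hij, by simp [Finset.mem_insert, ← hij, h1, h2]⟩

lemma per_sigma (B : Matrix (Fin n) (Fin n) ℝ) (a b : Fin n) (S : Finset (Fin n)) (x : ℝ)
    (σ : Equiv.Perm (Fin n)) :
    ∑ i : Fin n, (∏ j ∈ Finset.univ.erase i, NN B a b S x (σ j) j) • DD b S (σ i) i
      = ∑ k ∈ (insert b S)ᶜ, -(∏ i : Fin n, NN B a b (insert k S) x (σ i) i) := by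
  rw [← Finset.sum_subset (Finset.subset_univ ((insert b S)ᶜ))]
  · refine Finset.sum_congr rfl (fun k hk => ?_)
    rw [Finset.mem_compl, Finset.mem_insert, not_or] at hk
    by_cases hσ : σ k = k
    · have hDD : DD b S (σ k) k = -1 := by
        unfold DD
        rw [hσ, if_neg hk.2, if_neg hk.1, if_pos rfl]
      rw [hDD, smul_eq_mul, mul_neg_one, neg_inj]
      rw [← Finset.mul_prod_erase Finset.univ _ (Finset.mem_univ k)]
      rw [hσ, NN_insert_same, if_pos rfl, one_mul]
      refine Finset.prod_congr rfl (fun j hj => ?_)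
      have hjk : j ≠ k := (Finset.mem_erase.mp hj).1
      have : σ j ≠ k := fun h => hjk (σ.injective (h.trans hσ.symm))
      exact (NN_insert_other B a b S x this j).symm
    · have hDD : DD b S (σ k) k = 0 := DD_zero b S (fun h => hσ h.1)
      rw [hDD, smul_zero]
      have hz : ∏ i : Fin n, NN B a b (insert k S) x (σ i) i = 0 := by
        refine Finset.prod_eq_zero (Finset.mem_univ (σ.symm k)) ?_
        rw [Equiv.apply_symm_apply, NN_insert_same, if_neg]
        exact fun h => hσ ((congrArg σ h).symm.trans (σ.apply_symm_apply k))
      rw [hz, neg_zero]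
  · intro i _ hi
    rw [Finset.mem_compl, not_not] at hi
    have : DD b S (σ i) i = 0 := DD_zero b S (fun h => h.2 (h.1 ▸ hi))
    rw [this, smul_zero]

lemma hasDerivAt_FF (B : Matrix (Fin n) (Fin n) ℝ) (a b : Fin n) (S : Finset (Fin n)) (x : ℝ) :
    HasDerivAt (FF B a b S)
      (-∑ k ∈ (insert b S)ᶜ, FF B a b (insert k S) x) x := by
  have key : ∀ σ : Equiv.Perm (Fin n),
      HasDerivAt (fun s => ∏ i : Fin n, NN B a b S s (σ i) i)
        (∑ i : Fin n, (∏ j ∈ Finset.univ.erase i, NN B a b S x (σ j) j) • DD b S (σ i) i) x :=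
    fun σ => HasDerivAt.fun_finsetProd (fun i _ => hasDerivAt_NN B a b S (σ i) i x)
  have main : HasDerivAt (FF B a b S)
      (∑ σ : Equiv.Perm (Fin n), ((Equiv.Perm.sign σ : ℤ) : ℝ) *
        ∑ i : Fin n, (∏ j ∈ Finset.univ.erase i, NN B a b S x (σ j) j) • DD b S (σ i) i) x := by
    have h2 : HasDerivAt (fun s => ∑ σ : Equiv.Perm (Fin n), ((Equiv.Perm.sign σ : ℤ) : ℝ) *
        ∏ i : Fin n, NN B a b S s (σ i) i)
        (∑ σ : Equiv.Perm (Fin n), ((Equiv.Perm.sign σ : ℤ) : ℝ) *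
          ∑ i : Fin n, (∏ j ∈ Finset.univ.erase i, NN B a b S x (σ j) j) • DD b S (σ i) i) x :=
      HasDerivAt.fun_sum (fun σ _ => ((key σ).const_mul _))
    have hfe : FF B a b S = fun s => ∑ σ : Equiv.Perm (Fin n), ((Equiv.Perm.sign σ : ℤ) : ℝ) *
        ∏ i : Fin n, NN B a b S s (σ i) i := by
      funext s; exact Matrix.det_apply' _
    rw [hfe]; exact h2
  convert main using 1
  simp only [per_sigma B a b S x, Finset.mul_sum]
  rw [Finset.sum_comm, ← Finset.sum_neg_distrib]
  refine Finset.sum_congr rfl (fun k _ => ?_)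
  rw [FF, Matrix.det_apply', ← Finset.sum_neg_distrib]
  exact Finset.sum_congr rfl (fun σ _ => by ring)

/-- Candidate index sets after `r` derivatives starting from `S`. -/
def cand (b : Fin n) (S : Finset (Fin n)) (r : ℕ) : Finset (Finset (Fin n)) :=
  (Finset.univ.powersetCard (S.card + r)).filter (fun T => S ⊆ T ∧ b ∉ T)

lemma mem_cand {b : Fin n} {S T : Finset (Fin n)} {r : ℕ} :
    T ∈ cand b S r ↔ T.card = S.card + r ∧ S ⊆ T ∧ b ∉ T := by
  simp [cand, Finset.mem_powersetCard_univ, and_comm, and_assoc]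

lemma cand_zero {b : Fin n} {S : Finset (Fin n)} (hb : b ∉ S) : cand b S 0 = {S} := by
  ext T
  rw [mem_cand, Finset.mem_singleton]
  constructor
  · rintro ⟨hc, hsub, -⟩
    exact (Finset.eq_of_subset_of_card_le hsub (by omega)).symm
  · rintro rfl; exact ⟨by omega, Finset.Subset.refl _, hb⟩

lemma step_sum (B : Matrix (Fin n) (Fin n) ℝ) (a b : Fin n) (S : Finset (Fin n)) (r : ℕ)
    (t : ℝ) :
    ∑ T ∈ cand b S r, ∑ k ∈ (insert b T)ᶜ, FF B a b (insert k T) t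
      = (r + 1 : ℝ) * ∑ U ∈ cand b S (r + 1), FF B a b U t := by
  rw [Finset.sum_sigma' (cand b S r) (fun T => (insert b T)ᶜ)
        (fun T k => FF B a b (insert k T) t)]
  have : ∑ U ∈ cand b S (r+1), ∑ _k ∈ U \ S, FF B a b U t
      = (r + 1 : ℝ) * ∑ U ∈ cand b S (r + 1), FF B a b U t := by
    rw [Finset.mul_sum]
    refine Finset.sum_congr rfl (fun U hU => ?_)
    rw [mem_cand] at hU
    rw [Finset.sum_const, Finset.card_sdiff_of_subset hU.2.1, hU.1, nsmul_eq_mul]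
    congr 1
    rw [Nat.add_sub_cancel_left]
    push_cast
    ring
  rw [← this, Finset.sum_sigma' (cand b S (r+1)) (fun U => U \ S) (fun U _ => FF B a b U t)]
  refine Finset.sum_nbij' (fun p => ⟨insert p.2 p.1, p.2⟩) (fun q => ⟨q.1.erase q.2, q.2⟩)
    ?_ ?_ ?_ ?_ ?_
  · rintro ⟨T, k⟩ hp
    rw [Finset.mem_sigma, mem_cand] at hp
    obtain ⟨⟨hc, hsub, hbT⟩, hk⟩ := hp
    rw [Finset.mem_compl, Finset.mem_insert, not_or] at hk
    rw [Finset.mem_sigma, mem_cand]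
    refine ⟨⟨?_, ?_, ?_⟩, ?_⟩
    · rw [Finset.card_insert_of_notMem hk.2]; omega
    · exact hsub.trans (Finset.subset_insert _ _)
    · rw [Finset.mem_insert, not_or]; exact ⟨fun h => hk.1 h.symm, hbT⟩
    · rw [Finset.mem_sdiff]
      exact ⟨Finset.mem_insert_self _ _, fun h => hk.2 (hsub h)⟩
  · rintro ⟨U, k⟩ hq
    rw [Finset.mem_sigma, mem_cand, Finset.mem_sdiff] at hq
    obtain ⟨⟨hc, hsub, hbU⟩, hkU, hkS⟩ := hq
    rw [Finset.mem_sigma, mem_cand]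
    refine ⟨⟨?_, ?_, ?_⟩, ?_⟩
    · rw [Finset.card_erase_of_mem hkU]; omega
    · intro x hx
      rw [Finset.mem_erase]
      exact ⟨fun h => hkS (h ▸ hx), hsub hx⟩
    · exact fun h => hbU (Finset.mem_of_mem_erase h)
    · rw [Finset.mem_compl, Finset.mem_insert, not_or]
      exact ⟨fun h => hbU (h ▸ hkU), Finset.notMem_erase _ _⟩
  · rintro ⟨T, k⟩ hp
    rw [Finset.mem_sigma] at hp
    have hk : k ∉ T := by
      have := hp.2; rw [Finset.mem_compl, Finset.mem_insert, not_or] at this; exact this.2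
    simp [Finset.erase_insert hk]
  · rintro ⟨U, k⟩ hq
    rw [Finset.mem_sigma, Finset.mem_sdiff] at hq
    simp [Finset.insert_erase hq.2.1]
  · rintro ⟨T, k⟩ _; rfl

lemma iteratedDeriv_FF (B : Matrix (Fin n) (Fin n) ℝ) (a b : Fin n) (r : ℕ)
    (S : Finset (Fin n)) (hb : b ∉ S) (t : ℝ) :
    iteratedDeriv r (FF B a b S) t
      = (-1 : ℝ) ^ r * (r.factorial : ℝ) * ∑ T ∈ cand b S r, FF B a b T t := by
  induction r generalizing t with
  | zero => simp [cand_zero hb, iteratedDeriv_zero]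
  | succ r ih =>
    rw [iteratedDeriv_succ]
    have hfun : iteratedDeriv r (FF B a b S)
        = fun u => (-1 : ℝ) ^ r * (r.factorial : ℝ) * ∑ T ∈ cand b S r, FF B a b T u := by
      funext u; exact ih u
    rw [hfun, deriv_const_mul _ ?_]
    · rw [deriv_fun_sum (fun T _ => (hasDerivAt_FF B a b T t).differentiableAt)]
      have hd : ∀ T ∈ cand b S r, deriv (FF B a b T) t
          = -∑ k ∈ (insert b T)ᶜ, FF B a b (insert k T) t :=
        fun T _ => (hasDerivAt_FF B a b T t).deriv
      rw [Finset.sum_congr rfl hd, Finset.sum_neg_distrib, step_sum]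
      rw [Nat.factorial_succ, pow_succ]
      push_cast
      ring
    · exact DifferentiableAt.fun_sum (fun T _ => (hasDerivAt_FF B a b T t).differentiableAt)

lemma FF_empty (B : Matrix (Fin n) (Fin n) ℝ) (a b : Fin n) (s : ℝ) :
    FF B a b ∅ s = (B - s • 1).adjugate a b := by
  rw [Matrix.adjugate_apply, FF]
  congr 1

lemma FF_of_mem (B : Matrix (Fin n) (Fin n) ℝ) (a b : Fin n) (S : Finset (Fin n))
    (ha : a ∈ S) (hb : b ∉ S) (s : ℝ) : FF B a b S s = 0 := by
  have hab : a ≠ b := fun h => hb (h ▸ ha)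
  refine Matrix.det_zero_of_row_eq hab ?_
  funext j
  simp only [NN, ha, if_true, hb, if_false, Matrix.updateRow_apply, if_pos rfl,
    Pi.single_apply]

lemma FF_eq_adjugate (B : Matrix (Fin n) (Fin n) ℝ) (a b : Fin n) (S : Finset (Fin n))
    (ha : a ∈ Sᶜ) (hb : b ∈ Sᶜ) (s : ℝ) :
    FF B a b S s = (principalSub B Sᶜ - s • 1).adjugate
      ((Sᶜ.orderIsoOfFin rfl).symm ⟨a, ha⟩) ((Sᶜ.orderIsoOfFin rfl).symm ⟨b, hb⟩) := by
  classical
  set T := Sᶜ with hT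
  set e₁ : Fin T.card → Fin n := fun i => ((T.orderIsoOfFin rfl) i : Fin n) with he₁
  set e₂ : Fin S.card → Fin n := fun i => ((S.orderIsoOfFin rfl) i : Fin n) with he₂
  have he₁i : Function.Injective e₁ :=
    fun _ _ h => (T.orderIsoOfFin rfl).injective (Subtype.ext h)
  have he₂i : Function.Injective e₂ :=
    fun _ _ h => (S.orderIsoOfFin rfl).injective (Subtype.ext h)
  have he₁m : ∀ i, e₁ i ∈ T := fun i => ((T.orderIsoOfFin rfl) i).2
  have he₂m : ∀ i, e₂ i ∈ S := fun i => ((S.orderIsoOfFin rfl) i).2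
  have he₁nm : ∀ i, e₁ i ∉ S := by
    intro i; have := he₁m i; rwa [hT, Finset.mem_compl] at this
  have hbij : Function.Bijective (Sum.elim e₁ e₂) := by
    rw [Fintype.bijective_iff_injective_and_card]
    constructor
    · rintro (x | x) (y | y) h <;> simp only [Sum.elim_inl, Sum.elim_inr] at h
      · rw [he₁i h]
      · exact absurd (h ▸ he₂m y) (he₁nm x)
      · exact absurd (h.symm ▸ he₂m x) (he₁nm y)
      · rw [he₂i h]
    · simp only [Fintype.card_sum, Fintype.card_fin]
      rw [hT, add_comm, Finset.card_add_card_compl, Fintype.card_fin]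
  set φ : (Fin T.card ⊕ Fin S.card) ≃ Fin n := Equiv.ofBijective _ hbij with hφ
  set b' : Fin T.card := (T.orderIsoOfFin rfl).symm ⟨b, hb⟩ with hb'
  set a' : Fin T.card := (T.orderIsoOfFin rfl).symm ⟨a, ha⟩ with ha'
  have he₁b : e₁ b' = b := by rw [he₁, hb']; simp
  have he₁a : e₁ a' = a := by rw [he₁, ha']; simp
  set A' : Matrix (Fin T.card) (Fin T.card) ℝ :=
    (principalSub B T - s • 1).updateRow b' (Pi.single a' 1) with hA'
  set B'' : Matrix (Fin T.card) (Fin S.card) ℝ :=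
    Matrix.of (fun i j => NN B a b S s (e₁ i) (e₂ j)) with hB''
  have hsub : (NN B a b S s).submatrix φ φ = Matrix.fromBlocks A' B'' 0 1 := by
    ext (i | i) (j | j)
    · simp only [Matrix.submatrix_apply, hφ, Equiv.ofBijective_apply, Sum.elim_inl,
        Matrix.fromBlocks_apply₁₁]
      rw [NN]
      simp only [he₁nm i, if_false, Matrix.updateRow_apply, hA']
      by_cases hib : i = b'
      · rw [if_pos (by rw [hib, he₁b]), if_pos hib]
        simp only [Pi.single_apply]
        by_cases hja : j = a'
        · rw [if_pos (by rw [hja, he₁a]), if_pos hja]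
        · rw [if_neg (fun h => hja (he₁i (by rw [h, he₁a]))), if_neg hja]
      · rw [if_neg (fun h => hib (he₁i (by rw [h, he₁b]))), if_neg hib]
        simp only [Matrix.sub_apply, Matrix.smul_apply, smul_eq_mul, principalSub,
          Matrix.submatrix_apply, Matrix.one_apply]
        by_cases hij : i = j
        · rw [if_pos (by rw [hij]), if_pos hij]
        · rw [if_neg (fun h => hij (he₁i h)), if_neg hij]
    · simp only [Matrix.submatrix_apply, hφ, Equiv.ofBijective_apply, Sum.elim_inl,
        Sum.elim_inr, Matrix.fromBlocks_apply₁₂, hB'', Matrix.of_apply]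
    · simp only [Matrix.submatrix_apply, hφ, Equiv.ofBijective_apply, Sum.elim_inl,
        Sum.elim_inr, Matrix.fromBlocks_apply₂₁, Matrix.zero_apply]
      rw [NN]
      simp only [he₂m i, if_true]
      rw [if_neg]
      exact fun h => (he₁nm j) (h ▸ he₂m i)
    · simp only [Matrix.submatrix_apply, hφ, Equiv.ofBijective_apply, Sum.elim_inr,
        Matrix.fromBlocks_apply₂₂, Matrix.one_apply]
      rw [NN]
      simp only [he₂m i, if_true]
      by_cases hij : i = j
      · rw [if_pos (by rw [hij]), if_pos hij]
      · rw [if_neg (fun h => hij ((he₂i h).symm)), if_neg hij]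
  rw [Matrix.adjugate_apply, FF, ← Matrix.det_submatrix_equiv_self φ, hsub,
    Matrix.det_fromBlocks_zero₂₁, Matrix.det_one, mul_one]

lemma orderIso_inj (T : Finset (Fin n)) :
    Function.Injective (fun i => ((T.orderIsoOfFin rfl) i : Fin n)) :=
  fun _ _ h => (T.orderIsoOfFin rfl).injective (Subtype.ext h)

lemma key_sum (T : Finset (Fin n)) (c : Fin n) (hc : c ∈ T) (f : Fin T.card → ℝ) :
    ∑ j, (if c = ((T.orderIsoOfFin rfl) j : Fin n) then 1 else 0) * f j
      = f ((T.orderIsoOfFin rfl).symm ⟨c, hc⟩) := by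
  set c' := (T.orderIsoOfFin rfl).symm ⟨c, hc⟩ with hc'
  have hec : ((T.orderIsoOfFin rfl) c' : Fin n) = c := by rw [hc']; simp
  have hiff : ∀ j, (c = ((T.orderIsoOfFin rfl) j : Fin n)) ↔ j = c' := by
    intro j
    constructor
    · intro h
      exact (orderIso_inj T (show ((T.orderIsoOfFin rfl) c' : Fin n) = _ by
        simp only []; rw [hec]; exact h)).symm
    · intro h; rw [h, hec]
  simp only [hiff, ite_mul, one_mul, zero_mul]
  rw [Finset.sum_ite_eq' Finset.univ c' f, if_pos (Finset.mem_univ _)]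

lemma key_sum_zero (T : Finset (Fin n)) (c : Fin n) (hc : c ∉ T) (f : Fin T.card → ℝ) :
    ∑ j, (if c = ((T.orderIsoOfFin rfl) j : Fin n) then 1 else 0) * f j = 0 := by
  refine Finset.sum_eq_zero (fun j _ => ?_)
  rw [if_neg, zero_mul]
  intro h
  exact hc (h ▸ ((T.orderIsoOfFin rfl) j).2)

lemma entry_eq (T : Finset (Fin n)) (M : Matrix (Fin T.card) (Fin T.card) ℝ) (a b : Fin n) :
    (colsId T * M * (colsId T)ᵀ) a b
      = if h : a ∈ T ∧ b ∈ T then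
          M ((T.orderIsoOfFin rfl).symm ⟨a, h.1⟩) ((T.orderIsoOfFin rfl).symm ⟨b, h.2⟩)
        else 0 := by
  rw [Matrix.mul_apply]
  simp only [Matrix.mul_apply, Matrix.transpose_apply, colsId, Finset.sum_mul]
  rw [Finset.sum_comm]
  have hinner : ∀ j : Fin T.card,
      ∑ j', (if a = ((T.orderIsoOfFin rfl) j : Fin n) then 1 else 0) * M j j' *
        (if b = ((T.orderIsoOfFin rfl) j' : Fin n) then 1 else 0)
      = (if a = ((T.orderIsoOfFin rfl) j : Fin n) then 1 else 0) *
        ∑ j', (if b = ((T.orderIsoOfFin rfl) j' : Fin n) then 1 else 0) * M j j' := by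
    intro j
    rw [Finset.mul_sum]
    refine Finset.sum_congr rfl (fun j' _ => by ring)
  rw [Finset.sum_congr rfl (fun j _ => hinner j)]
  by_cases ha : a ∈ T
  · by_cases hb : b ∈ T
    · rw [dif_pos ⟨ha, hb⟩, key_sum T a ha]
      rw [key_sum T b hb (fun j' => M _ j')]
    · rw [dif_neg (fun h => hb h.2)]
      refine Finset.sum_eq_zero (fun j _ => ?_)
      rw [key_sum_zero T b hb, mul_zero]
  · rw [dif_neg (fun h => ha h.1)]
    refine Finset.sum_eq_zero (fun j _ => ?_)
    rw [if_neg, zero_mul]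
    intro h
    exact ha (h ▸ ((T.orderIsoOfFin rfl) j).2)

end Aux

/-- r-th entrywise derivative of P(t) = Adj(B - t I):
P⁽ʳ⁾(t) = (-1)^r r! ∑_{|S| = r} I₋ₛ Adj(B₋ₛ,₋ₛ - t I) I₋ₛᵀ for 0 ≤ r ≤ n - 1. -/
theorem iteratedDeriv_adjugate_sub_smul_one (n : ℕ) (hn : 2 ≤ n)
    (B : Matrix (Fin n) (Fin n) ℝ) (hsymm : B.IsSymm)
    (r : ℕ) (hr : r ≤ n - 1) (t : ℝ) (a b : Fin n) :
    iteratedDeriv r (fun s : ℝ => (B - s • 1).adjugate a b) t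
      = (((-1 : ℝ) ^ r * (r.factorial : ℝ)) •
          ∑ S ∈ Finset.univ.powersetCard r,
            colsId Sᶜ * (principalSub B Sᶜ - t • 1).adjugate * (colsId Sᶜ)ᵀ) a b := by
  have h1 : (fun s : ℝ => (B - s • 1).adjugate a b) = FF B a b ∅ := by
    funext s; exact (FF_empty B a b s).symm
  rw [h1, iteratedDeriv_FF B a b r ∅ (Finset.notMem_empty b) t]
  have hRHS : (((-1 : ℝ) ^ r * (r.factorial : ℝ)) •
      ∑ S ∈ Finset.univ.powersetCard r,
        colsId Sᶜ * (principalSub B Sᶜ - t • 1).adjugate * (colsId Sᶜ)ᵀ) a b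
      = (-1 : ℝ) ^ r * (r.factorial : ℝ) *
        ∑ S ∈ Finset.univ.powersetCard r,
          (colsId Sᶜ * (principalSub B Sᶜ - t • 1).adjugate * (colsId Sᶜ)ᵀ) a b := by
    rw [Matrix.smul_apply, smul_eq_mul, Matrix.sum_apply]
  rw [hRHS]
  congr 1
  have hcand : cand b ∅ r = (Finset.univ.powersetCard r).filter (fun T => b ∉ T) := by
    ext U
    simp only [mem_cand, Finset.mem_filter, Finset.mem_powersetCard_univ,
      Finset.card_empty, Finset.empty_subset, true_and, Nat.zero_add]
  rw [hcand, Finset.sum_filter]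
  refine (Finset.sum_congr rfl (fun S _ => ?_)).symm
  rw [entry_eq]
  by_cases hbS : b ∈ S
  · rw [dif_neg (fun h => (Finset.mem_compl.mp h.2) hbS), if_neg (by simpa using hbS)]
  · rw [if_pos hbS]
    by_cases haS : a ∈ S
    · rw [dif_neg (fun h => (Finset.mem_compl.mp h.1) haS)]
      exact (FF_of_mem B a b S haS hbS t).symm
    · rw [dif_pos ⟨Finset.mem_compl.mpr haS, Finset.mem_compl.mpr hbS⟩]
      exact (FF_eq_adjugate B a b S (Finset.mem_compl.mpr haS) (Finset.mem_compl.mpr hbS) t).symm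
end

section
/- Let λ₁ ≥ ... ≥ λₙ ≥ 0 and 1 ≤ τ ≤ n. Then for every 1 ≤ i ≤ n, σ_τ(λ) ≤ σ_{τ−1}(λ₋ᵢ) · (λ_{min{i,τ}} + Σ_{j=τ+1}^n λ_j), where σ_m denotes the elementary symmetric polynomial of degree m and λ₋ᵢ is λ with the i-th entry removed. -/
open Finset

/-- for λ₁ ≥ … ≥ λₙ ≥ 0 and 1 ≤ τ ≤ n, for every i,
σ_τ(λ) ≤ σ_{τ-1}(λ₋ᵢ) · (λ_{min{i,τ}} + ∑_{j=τ+1}^n λ_j).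
(Indices are 0-based: the 1-based index i corresponds to `i : Fin n` with value i+1,
so λ_{min{i,τ}} is `lam ⟨min i.1 (τ-1), _⟩` and ∑_{j=τ+1}^n λ_j sums over `τ ≤ j.1`.) -/
theorem esymm_le_esymm_erase_mul (n τ : ℕ) (hτ1 : 1 ≤ τ) (hτn : τ ≤ n)
    (lam : Fin n → ℝ)
    (hmono : ∀ i j : Fin n, i ≤ j → lam j ≤ lam i)
    (hnonneg : ∀ i, 0 ≤ lam i) (i : Fin n) :
    ∑ S ∈ Finset.univ.powersetCard τ, ∏ j ∈ S, lam j
      ≤ (∑ T ∈ (Finset.univ.erase i).powersetCard (τ - 1), ∏ j ∈ T, lam j) *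
        (lam ⟨min i.1 (τ - 1), lt_of_le_of_lt (min_le_left _ _) i.2⟩ +
          ∑ j ∈ Finset.univ.filter (fun j : Fin n => τ ≤ j.1), lam j) := by
  classical
  set k : Fin n := ⟨min i.1 (τ - 1), lt_of_le_of_lt (min_le_left _ _) i.2⟩ with hk
  set c : ℝ := lam k + ∑ j ∈ Finset.univ.filter (fun j : Fin n => τ ≤ j.1), lam j with hc
  have hc0 : 0 ≤ c := add_nonneg (hnonneg k) (Finset.sum_nonneg fun j _ => hnonneg j)
  set g : Finset (Fin n) → Finset (Fin n) := fun S =>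
    if i ∈ S then S.erase i else (if h : S.Nonempty then S.erase (S.max' h) else S) with hg
  have hmaps : ∀ S ∈ Finset.univ.powersetCard τ,
      g S ∈ (Finset.univ.erase i).powersetCard (τ - 1) := by
    intro S hS
    rw [Finset.mem_powersetCard_univ] at hS
    have hne : S.Nonempty := Finset.card_pos.mp (by omega)
    rw [Finset.mem_powersetCard]
    by_cases hi : i ∈ S
    · simp only [hg, if_pos hi]
      exact ⟨Finset.erase_subset_erase _ (Finset.subset_univ S),
        by rw [Finset.card_erase_of_mem hi, hS]⟩
    · simp only [hg, if_neg hi, dif_pos hne]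
      refine ⟨fun t ht => ?_, ?_⟩
      · have htS := Finset.mem_of_mem_erase ht
        exact Finset.mem_erase.mpr ⟨fun h => hi (h ▸ htS), Finset.mem_univ t⟩
      · rw [Finset.card_erase_of_mem (S.max'_mem hne), hS]
  rw [← Finset.sum_fiberwise_of_maps_to hmaps (fun S => ∏ j ∈ S, lam j), Finset.sum_mul]
  apply Finset.sum_le_sum
  intro T hT
  rw [Finset.mem_powersetCard] at hT
  obtain ⟨hTsub, hTcard⟩ := hT
  have hiT : i ∉ T := fun h => (Finset.mem_erase.mp (hTsub h)).1 rfl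
  set M : Finset (Fin n) :=
    insert i (Finset.univ.filter fun m => m ∉ T ∧ m ≠ i ∧ ∀ t ∈ T, t < m) with hM
  have hMT : ∀ m ∈ M, m ∉ T := by
    intro m hm
    rcases Finset.mem_insert.mp hm with rfl | hm
    · exact hiT
    · exact (Finset.mem_filter.mp hm).2.1
  have hsub : (Finset.univ.powersetCard τ).filter (fun S => g S = T)
      ⊆ M.image (fun m => insert m T) := by
    intro S hS
    rw [Finset.mem_filter, Finset.mem_powersetCard_univ] at hS
    obtain ⟨hScard, hgS⟩ := hS
    have hne : S.Nonempty := Finset.card_pos.mp (by omega)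
    rw [Finset.mem_image]
    by_cases hi : i ∈ S
    · refine ⟨i, Finset.mem_insert_self _ _, ?_⟩
      rw [← hgS]
      simp only [hg, if_pos hi]
      exact Finset.insert_erase hi
    · have hgS' : S.erase (S.max' hne) = T := by
        rw [← hgS]; simp only [hg, if_neg hi, dif_pos hne]
      refine ⟨S.max' hne, ?_, ?_⟩
      · refine Finset.mem_insert_of_mem (Finset.mem_filter.mpr ⟨Finset.mem_univ _, ?_, ?_, ?_⟩)
        · rw [← hgS']; exact Finset.notMem_erase _ _
        · exact fun h => hi (h ▸ S.max'_mem hne)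
        · intro t ht
          rw [← hgS'] at ht
          exact lt_of_le_of_ne (S.le_max' t (Finset.mem_of_mem_erase ht))
            (Finset.mem_erase.mp ht).1
      · rw [← hgS']
        exact Finset.insert_erase (S.max'_mem hne)
  have hinj : ∀ a ∈ M, ∀ b ∈ M, insert a T = insert b T → a = b := by
    intro a ha b hb hab
    have h2 : a ∈ insert b T := hab ▸ Finset.mem_insert_self a T
    rcases Finset.mem_insert.mp h2 with h | h
    · exact h
    · exact absurd h (hMT a ha)
  have step1 : ∑ S ∈ (Finset.univ.powersetCard τ).filter (fun S => g S = T), ∏ j ∈ S, lam j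
      ≤ ∑ S ∈ M.image (fun m => insert m T), ∏ j ∈ S, lam j :=
    Finset.sum_le_sum_of_subset_of_nonneg hsub
      (fun S _ _ => Finset.prod_nonneg fun j _ => hnonneg j)
  have step2 : ∑ S ∈ M.image (fun m => insert m T), ∏ j ∈ S, lam j
      = (∑ m ∈ M, lam m) * ∏ j ∈ T, lam j := by
    rw [Finset.sum_image hinj, Finset.sum_mul]
    exact Finset.sum_congr rfl fun m hm => Finset.prod_insert (hMT m hm)
  -- lower bound τ-1 ≤ b.1 for b in the filter part
  have hge : ∀ b ∈ Finset.univ.filter (fun m => m ∉ T ∧ m ≠ i ∧ ∀ t ∈ T, t < m),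
      τ - 1 ≤ b.1 := by
    intro b hb
    obtain ⟨-, -, -, hlt'⟩ := Finset.mem_filter.mp hb
    have hTle : T ⊆ Finset.Iio b := fun t ht => Finset.mem_Iio.mpr (hlt' t ht)
    have := Finset.card_le_card hTle
    rwa [hTcard, Fin.card_Iio] at this
  have hlowk : ∀ e ∈ M, e.1 < τ → lam e ≤ lam k := by
    intro e he hlt
    apply hmono k e
    rcases Finset.mem_insert.mp he with rfl | he
    · exact Fin.le_def.mpr (min_le_left _ _)
    · exact Fin.le_def.mpr (le_trans (min_le_right _ _) (hge e he))
  have hlowss : ∀ a ∈ M, a.1 < τ → ∀ b ∈ M, b.1 < τ → a = b := by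
    have key : ∀ b ∈ Finset.univ.filter (fun m => m ∉ T ∧ m ≠ i ∧ ∀ t ∈ T, t < m),
        b.1 < τ → i.1 < τ → False := by
      intro b hb hbτ hiτ
      obtain ⟨-, hbT, hbi, hlt'⟩ := Finset.mem_filter.mp hb
      have hbge := hge b hb
      have hbval : b.1 = τ - 1 := by omega
      have hTle : T ⊆ Finset.Iio b := fun t ht => Finset.mem_Iio.mpr (hlt' t ht)
      have hTeq : T = Finset.Iio b := by
        apply Finset.eq_of_subset_of_card_le hTle
        rw [hTcard, Fin.card_Iio, hbval]
      have h1 : ¬ i < b := fun h => hiT (hTeq ▸ Finset.mem_Iio.mpr h)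
      have h2 : b.1 ≤ i.1 := Fin.le_def.mp (not_lt.mp h1)
      exact hbi (Fin.ext (by omega : b.1 = i.1))
    intro a ha haτ b hb hbτ
    rcases Finset.mem_insert.mp ha with rfl | ha
    · rcases Finset.mem_insert.mp hb with h | hb
      · exact h.symm
      · exact absurd (key b hb hbτ haτ) not_false
    · rcases Finset.mem_insert.mp hb with rfl | hb
      · exact absurd (key a ha haτ hbτ) not_false
      · exact Fin.ext (by have := hge a ha; have := hge b hb; omega)
  have hMle : ∑ m ∈ M, lam m ≤ c := by
    rw [← Finset.sum_filter_add_sum_filter_not M (fun m => m.1 < τ)]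
    apply add_le_add
    · rcases Finset.eq_empty_or_nonempty (M.filter (fun m => m.1 < τ)) with he | ⟨e, he⟩
      · rw [he, Finset.sum_empty]; exact hnonneg k
      · have heM := Finset.mem_filter.mp he
        have hsing : M.filter (fun m => m.1 < τ) = {e} := by
          apply Finset.eq_singleton_iff_unique_mem.mpr
          refine ⟨he, fun x hx => ?_⟩
          have hxM := Finset.mem_filter.mp hx
          exact hlowss x hxM.1 hxM.2 e heM.1 heM.2
        rw [hsing, Finset.sum_singleton]
        exact hlowk e heM.1 heM.2
    · apply Finset.sum_le_sum_of_subset_of_nonneg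
      · intro m hm
        have := Finset.mem_filter.mp hm
        exact Finset.mem_filter.mpr ⟨Finset.mem_univ _, not_lt.mp this.2⟩
      · exact fun j _ _ => hnonneg j
  calc ∑ S ∈ (Finset.univ.powersetCard τ).filter (fun S => g S = T), ∏ j ∈ S, lam j
      ≤ (∑ m ∈ M, lam m) * ∏ j ∈ T, lam j := step2 ▸ step1
    _ ≤ c * ∏ j ∈ T, lam j :=
        mul_le_mul_of_nonneg_right hMle (Finset.prod_nonneg fun j _ => hnonneg j)
    _ = (∏ j ∈ T, lam j) * c := mul_comm _ _
end

section
/- Let λ₁ ≥ ... ≥ λₙ ≥ 0 and 1 ≤ τ ≤ n. Then σ_τ(λ) ≤ σ_{τ−1}(λ₋₁) · Σ_{i=1}^{n−τ+1} λ_i, where λ₋₁ denotes λ with the first entry removed. -/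
open Finset

/-- for λ₁ ≥ … ≥ λₙ ≥ 0 and 1 ≤ τ ≤ n,
σ_τ(λ) ≤ σ_{τ-1}(λ₋₁) · ∑_{i=1}^{n-τ+1} λᵢ.
(0-based indexing: λ₋₁ removes the index 0, and the last sum is over `i.1 < n - τ + 1`.) -/
theorem esymm_le_esymm_eraseFirst_mul (n τ : ℕ) (hτ1 : 1 ≤ τ) (hτn : τ ≤ n)
    (lam : Fin n → ℝ)
    (hmono : ∀ i j : Fin n, i ≤ j → lam j ≤ lam i)
    (hnonneg : ∀ i, 0 ≤ lam i) :
    ∑ S ∈ Finset.univ.powersetCard τ, ∏ j ∈ S, lam j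
      ≤ (∑ T ∈ (Finset.univ.erase (⟨0, lt_of_lt_of_le Nat.one_pos (hτ1.trans hτn)⟩ : Fin n)).powersetCard (τ - 1),
            ∏ j ∈ T, lam j) *
        ∑ i ∈ Finset.univ.filter (fun i : Fin n => i.1 < n - τ + 1), lam i := by
  have hn : 0 < n := lt_of_lt_of_le hτ1 hτn
  set z : Fin n := ⟨0, lt_of_lt_of_le Nat.one_pos (hτ1.trans hτn)⟩ with hz
  rw [Finset.sum_mul_sum, ← Finset.sum_product']
  set A := (Finset.univ.erase z).powersetCard (τ - 1)
  set B := Finset.univ.filter (fun i : Fin n => i.1 < n - τ + 1)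
  -- nonempty of each S
  have hne : ∀ S ∈ (Finset.univ : Finset (Fin n)).powersetCard τ, S.Nonempty := by
    intro S hS
    rw [Finset.mem_powersetCard] at hS
    exact Finset.card_pos.mp (hS.2 ▸ hτ1)
  -- the injection
  classical
  let e : Finset (Fin n) → Finset (Fin n) × Fin n := fun S =>
    if h : S.Nonempty then (S.erase (S.min' h), S.min' h) else (∅, z)
  have key : ∀ S ∈ (Finset.univ : Finset (Fin n)).powersetCard τ,
      e S ∈ A ×ˢ B ∧ (∏ j ∈ S, lam j) = (∏ j ∈ (e S).1, lam j) * lam (e S).2 := by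
    intro S hS
    have hSne := hne S hS
    rw [Finset.mem_powersetCard] at hS
    have hm : S.min' hSne ∈ S := Finset.min'_mem _ _
    simp only [e, dif_pos hSne]
    constructor
    · rw [Finset.mem_product]
      constructor
      · rw [Finset.mem_powersetCard]
        constructor
        · intro j hj
          rw [Finset.mem_erase] at hj ⊢
          refine ⟨fun hj0 => hj.1 ?_, Finset.mem_univ _⟩
          have h1 : S.min' hSne ≤ j := Finset.min'_le _ _ hj.2
          have h2 : (j : ℕ) = 0 := by rw [hj0]
          exact le_antisymm (by rw [Fin.le_def]; omega) h1
        · rw [Finset.card_erase_of_mem hm, hS.2]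
      · rw [Finset.mem_filter]
        refine ⟨Finset.mem_univ _, ?_⟩
        show (S.min' hSne).1 < n - τ + 1
        have hsub : S ⊆ Finset.Ici (S.min' hSne) := fun j hj =>
          Finset.mem_Ici.mpr (Finset.min'_le _ _ hj)
        have hcard : τ ≤ n - (S.min' hSne).1 := by
          calc τ = S.card := hS.2.symm
            _ ≤ (Finset.Ici (S.min' hSne)).card := Finset.card_le_card hsub
            _ = n - (S.min' hSne).1 := Fin.card_Ici _
        have := (S.min' hSne).2
        omega
    · rw [Finset.prod_erase_mul _ _ hm]
  have hinj : ∀ S ∈ (Finset.univ : Finset (Fin n)).powersetCard τ, ∀ S' ∈ (Finset.univ : Finset (Fin n)).powersetCard τ,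
      e S = e S' → S = S' := by
    intro S hS S' hS' hE
    have h1 := hne S hS
    have h2 := hne S' hS'
    simp only [e, dif_pos h1, dif_pos h2, Prod.mk.injEq] at hE
    have hmm : S.min' h1 = S'.min' h2 := hE.2
    rw [← Finset.insert_erase (Finset.min'_mem S h1), ← Finset.insert_erase (Finset.min'_mem S' h2),
      hE.1, hmm]
  calc ∑ S ∈ (Finset.univ : Finset (Fin n)).powersetCard τ, ∏ j ∈ S, lam j
      = ∑ p ∈ ((Finset.univ : Finset (Fin n)).powersetCard τ).image e, (∏ j ∈ p.1, lam j) * lam p.2 := by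
        rw [Finset.sum_image hinj]
        exact Finset.sum_congr rfl fun S hS => (key S hS).2
    _ ≤ ∑ p ∈ A ×ˢ B, (∏ j ∈ p.1, lam j) * lam p.2 := by
        apply Finset.sum_le_sum_of_subset_of_nonneg
        · intro p hp
          rw [Finset.mem_image] at hp
          obtain ⟨S, hS, rfl⟩ := hp
          exact (key S hS).1
        · intro p _ _
          exact mul_nonneg (Finset.prod_nonneg fun j _ => hnonneg j) (hnonneg _)
end

section
/- Let B be an n×n real symmetric positive semidefinite matrix with eigenvalues λ₁ ≥ ... ≥ λₙ, and let 1 ≤ τ₁ < τ₂ ≤ Rank(B). Then B_{τ₂} ⪯ B_{τ₁} ⪯ R · B_{τ₂} in the Loewner order, where R := (Σ_{i=τ₁}^n λᵢ)/(Σ_{i=τ₂}^n λᵢ) and B_τ denotes the τ-coordinate approximation of B. -/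
open Matrix Finset

/-- The τ-coordinate approximation B_τ = Q Diag(λ₁,…,λ_τ,λ_τ,…,λ_τ) Qᵀ + (∑_{i>τ} λᵢ)·I
(0-based indexing; the value λ_τ is `lam ⟨τ-1, _⟩`). -/
noncomputable def coordApprox {n : ℕ} (Q : Matrix (Fin n) (Fin n) ℝ) (lam : Fin n → ℝ)
    (τ : ℕ) : Matrix (Fin n) (Fin n) ℝ :=
  Q * Matrix.diagonal (fun i : Fin n =>
      if i.1 < τ then lam i else if h : τ - 1 < n then lam ⟨τ - 1, h⟩ else 0) * Qᵀ
    + (∑ j ∈ Finset.univ.filter (fun j : Fin n => τ ≤ j.1), lam j) • 1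

lemma conj_diag_psd {n : ℕ} (Q : Matrix (Fin n) (Fin n) ℝ) (v : Fin n → ℝ)
    (hv : ∀ i, 0 ≤ v i) : (Q * Matrix.diagonal v * Qᵀ).PosSemidef := by
  have h : (Matrix.diagonal v).PosSemidef := Matrix.posSemidef_diagonal_iff.mpr hv
  have h2 := h.mul_mul_conjTranspose_same Q
  rwa [Matrix.conjTranspose_eq_transpose_of_trivial] at h2

lemma coordApprox_eq {n : ℕ} (Q : Matrix (Fin n) (Fin n) ℝ) (lam : Fin n → ℝ)
    (τ : ℕ) (hQ : Q * Qᵀ = 1) :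
    coordApprox Q lam τ = Q * Matrix.diagonal (fun i : Fin n =>
      (if i.1 < τ then lam i else if h : τ - 1 < n then lam ⟨τ - 1, h⟩ else 0)
        + ∑ j ∈ Finset.univ.filter (fun j : Fin n => τ ≤ j.1), lam j) * Qᵀ := by
  set s := ∑ j ∈ Finset.univ.filter (fun j : Fin n => τ ≤ j.1), lam j with hs
  set e : Fin n → ℝ := fun i : Fin n =>
      if i.1 < τ then lam i else if h : τ - 1 < n then lam ⟨τ - 1, h⟩ else 0 with he
  have hdiag : Matrix.diagonal (fun i => e i + s)
      = Matrix.diagonal e + s • (1 : Matrix (Fin n) (Fin n) ℝ) := by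
    rw [← Matrix.diagonal_one, ← Matrix.diagonal_smul, Matrix.diagonal_add]
    funext i
    simp
  rw [coordApprox, hdiag, Matrix.mul_add, Matrix.add_mul, Matrix.mul_smul,
    Matrix.smul_mul, mul_one, hQ]

/-- B_{τ₂} ⪯ B_{τ₁} ⪯ R · B_{τ₂} with
R = (∑_{i=τ₁}^n λᵢ)/(∑_{i=τ₂}^n λᵢ) (1-based; 0-based this is a sum over τ-1 ≤ i). -/
theorem coordApprox_monotone (n τ₁ τ₂ : ℕ) (hτ1 : 1 ≤ τ₁) (hlt : τ₁ < τ₂)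
    (B Q : Matrix (Fin n) (Fin n) ℝ) (lam : Fin n → ℝ)
    (hpsd : B.PosSemidef) (hQ : Q * Qᵀ = 1)
    (hmono : ∀ i j : Fin n, i ≤ j → lam j ≤ lam i)
    (hdecomp : B = Q * Matrix.diagonal lam * Qᵀ)
    (hrank : τ₂ ≤ B.rank) :
    (coordApprox Q lam τ₁ - coordApprox Q lam τ₂).PosSemidef ∧
    ((((∑ i ∈ Finset.univ.filter (fun i : Fin n => τ₁ - 1 ≤ i.1), lam i) /
        (∑ i ∈ Finset.univ.filter (fun i : Fin n => τ₂ - 1 ≤ i.1), lam i)) •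
          coordApprox Q lam τ₂) - coordApprox Q lam τ₁).PosSemidef := by
  classical
  have hQ' : Qᵀ * Q = 1 := mul_eq_one_comm.mp hQ
  -- eigenvalues are nonnegative
  have hdiagB : Qᵀ * B * Q = Matrix.diagonal lam := by
    rw [hdecomp]
    calc Qᵀ * (Q * Matrix.diagonal lam * Qᵀ) * Q
        = (Qᵀ * Q) * Matrix.diagonal lam * (Qᵀ * Q) := by noncomm_ring
      _ = Matrix.diagonal lam := by rw [hQ', one_mul, mul_one]
  have hdpsd : (Matrix.diagonal lam).PosSemidef := by
    have := hpsd.mul_mul_conjTranspose_same Qᵀ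
    rwa [Matrix.conjTranspose_eq_transpose_of_trivial, Matrix.transpose_transpose,
      hdiagB] at this
  have hlam : ∀ i, 0 ≤ lam i := Matrix.posSemidef_diagonal_iff.mp hdpsd
  -- bounds on indices
  have hτ2n : τ₂ ≤ n := by
    have h1 : B.rank ≤ Fintype.card (Fin n) := B.rank_le_card_width
    simpa using hrank.trans h1
  have h2n : τ₂ - 1 < n := by omega
  have h1n : τ₁ - 1 < n := by omega
  -- rank bound gives positivity of lam ⟨τ₂-1⟩
  have hrankd : τ₂ ≤ Fintype.card {i // lam i ≠ 0} := by
    have h1 : B.rank ≤ (Matrix.diagonal lam).rank := by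
      calc B.rank = (Q * (Matrix.diagonal lam * Qᵀ)).rank := by
              rw [hdecomp, Matrix.mul_assoc]
        _ ≤ (Matrix.diagonal lam * Qᵀ).rank := Matrix.rank_mul_le_right _ _
        _ ≤ (Matrix.diagonal lam).rank := Matrix.rank_mul_le_left _ _
    rw [Matrix.rank_diagonal] at h1
    exact hrank.trans h1
  have hbpos : 0 < lam ⟨τ₂ - 1, h2n⟩ := by
    rcases lt_or_ge 0 (lam ⟨τ₂ - 1, h2n⟩) with h | h
    · exact h
    · exfalso
      have hb0 : lam ⟨τ₂ - 1, h2n⟩ = 0 := le_antisymm h (hlam _)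
      have hsub : Finset.univ.filter (fun i : Fin n => lam i ≠ 0)
          ⊆ Finset.univ.filter (fun i : Fin n => i.1 < τ₂ - 1) := by
        intro i hi
        simp only [Finset.mem_filter, Finset.mem_univ, true_and] at hi ⊢
        by_contra hc
        push_neg at hc
        have : lam i ≤ lam ⟨τ₂ - 1, h2n⟩ := hmono _ _ (by simpa [Fin.le_def] using hc)
        exact hi (le_antisymm (hb0 ▸ this) (hlam i))
      have hcard1 : Fintype.card {i // lam i ≠ 0}
          = (Finset.univ.filter (fun i : Fin n => lam i ≠ 0)).card :=
        Fintype.card_subtype _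
      have hcard2 : (Finset.univ.filter (fun i : Fin n => i.1 < τ₂ - 1)).card ≤ τ₂ - 1 := by
        have := Finset.card_le_card_of_injOn (f := Fin.val)
          (s := Finset.univ.filter (fun i : Fin n => i.1 < τ₂ - 1))
          (t := Finset.range (τ₂ - 1))
          (by intro i hi; simp at hi ⊢; omega)
          (by intro a _ b _ hab; exact Fin.ext hab)
        simpa using this
      have := (hcard1 ▸ hrankd).trans ((Finset.card_le_card hsub).trans hcard2)
      omega
  -- sums
  set s₁ := ∑ j ∈ Finset.univ.filter (fun j : Fin n => τ₁ ≤ j.1), lam j with hs₁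
  set s₂ := ∑ j ∈ Finset.univ.filter (fun j : Fin n => τ₂ ≤ j.1), lam j with hs₂
  set a := lam ⟨τ₁ - 1, h1n⟩ with ha
  set b := lam ⟨τ₂ - 1, h2n⟩ with hb
  have key : ∀ (τ : ℕ) (h : τ - 1 < n), 1 ≤ τ →
      ∑ j ∈ Finset.univ.filter (fun j : Fin n => τ - 1 ≤ j.1), lam j
        = lam ⟨τ - 1, h⟩ + ∑ j ∈ Finset.univ.filter (fun j : Fin n => τ ≤ j.1), lam j := by
    intro τ h h1
    have hset : Finset.univ.filter (fun j : Fin n => τ - 1 ≤ j.1)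
        = insert ⟨τ - 1, h⟩ (Finset.univ.filter (fun j : Fin n => τ ≤ j.1)) := by
      ext j
      simp only [Finset.mem_filter, Finset.mem_univ, true_and, Finset.mem_insert,
        Fin.ext_iff]
      omega
    rw [hset, Finset.sum_insert (by simp; omega)]
  have hS1 : ∑ i ∈ Finset.univ.filter (fun i : Fin n => τ₁ - 1 ≤ i.1), lam i = a + s₁ :=
    key τ₁ h1n hτ1
  have hS2 : ∑ i ∈ Finset.univ.filter (fun i : Fin n => τ₂ - 1 ≤ i.1), lam i = b + s₂ :=
    key τ₂ h2n (by omega)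
  have hs2nn : 0 ≤ s₂ := Finset.sum_nonneg fun i _ => hlam i
  have hs21 : s₂ ≤ s₁ := by
    apply Finset.sum_le_sum_of_subset_of_nonneg
    · intro i hi
      simp only [Finset.mem_filter, Finset.mem_univ, true_and] at hi ⊢
      omega
    · intro i _ _
      exact hlam i
  have finle : ∀ (m : ℕ) (h : m < n) (i : Fin n), m ≤ i.1 → (⟨m, h⟩ : Fin n) ≤ i := by
    intro m h i hm
    rwa [Fin.le_def]
  have finle' : ∀ (m : ℕ) (h : m < n) (i : Fin n), i.1 ≤ m → i ≤ (⟨m, h⟩ : Fin n) := by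
    intro m h i hm
    rwa [Fin.le_def]
  have hba : b ≤ a := hmono _ _ (finle _ _ _ (show τ₁ - 1 ≤ τ₂ - 1 by omega))
  have hS2pos : 0 < b + s₂ := by linarith
  set R := (a + s₁) / (b + s₂) with hR
  have hR1 : 1 ≤ R := by
    rw [hR, le_div_iff₀ hS2pos]
    linarith
  have hRS : R * (b + s₂) = a + s₁ := div_mul_cancel₀ _ (ne_of_gt hS2pos)
  -- pointwise entries
  set v₁ : Fin n → ℝ := fun i : Fin n =>
      (if i.1 < τ₁ then lam i else if h : τ₁ - 1 < n then lam ⟨τ₁ - 1, h⟩ else 0) + s₁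
    with hv₁
  set v₂ : Fin n → ℝ := fun i : Fin n =>
      (if i.1 < τ₂ then lam i else if h : τ₂ - 1 < n then lam ⟨τ₂ - 1, h⟩ else 0) + s₂
    with hv₂
  have hv₁i : ∀ i : Fin n, v₁ i = (if i.1 < τ₁ then lam i else a) + s₁ := by
    intro i; rw [hv₁]; simp only [dif_pos h1n]; rfl
  have hv₂i : ∀ i : Fin n, v₂ i = (if i.1 < τ₂ then lam i else b) + s₂ := by
    intro i; rw [hv₂]; simp only [dif_pos h2n]; rfl
  have hmono' : ∀ i : Fin n, i.1 < τ₁ → a ≤ lam i := by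
    intro i hi
    exact hmono _ _ (finle' _ _ _ (by omega))
  have hmono₁ : ∀ i : Fin n, τ₁ ≤ i.1 → lam i ≤ a := by
    intro i hi
    exact hmono _ _ (finle _ _ _ (by omega))
  have hmono₂ : ∀ i : Fin n, i.1 < τ₂ → b ≤ lam i := by
    intro i hi
    exact hmono _ _ (finle' _ _ _ (by omega))
  have hpt1 : ∀ i : Fin n, 0 ≤ v₁ i - v₂ i := by
    intro i
    rw [hv₁i, hv₂i]
    rcases lt_or_ge i.1 τ₁ with h1 | h1
    · rw [if_pos h1, if_pos (show i.1 < τ₂ by omega)]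
      linarith
    · rw [if_neg (show ¬ i.1 < τ₁ by omega)]
      rcases lt_or_ge i.1 τ₂ with h2 | h2
      · rw [if_pos h2]
        have := hmono₁ i h1
        linarith
      · rw [if_neg (show ¬ i.1 < τ₂ by omega)]
        linarith
  have hpt2 : ∀ i : Fin n, 0 ≤ R * v₂ i - v₁ i := by
    intro i
    rw [hv₁i, hv₂i]
    have hRb : R * (b + s₂) = a + s₁ := hRS
    have hRnn : (0:ℝ) ≤ R := by linarith
    rcases lt_or_ge i.1 τ₁ with h1 | h1
    · rw [if_pos h1, if_pos (show i.1 < τ₂ by omega)]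
      have h3 : a ≤ lam i := hmono' i h1
      nlinarith [mul_nonneg (sub_nonneg.mpr hR1) (sub_nonneg.mpr h3),
        mul_nonneg hRnn (sub_nonneg.mpr hba)]
    · rw [if_neg (show ¬ i.1 < τ₁ by omega)]
      rcases lt_or_ge i.1 τ₂ with h2 | h2
      · rw [if_pos h2]
        have h3 : b ≤ lam i := hmono₂ i h2
        nlinarith [mul_nonneg hRnn (sub_nonneg.mpr h3)]
      · rw [if_neg (show ¬ i.1 < τ₂ by omega)]
        linarith
  -- matrix identities
  rw [coordApprox_eq Q lam τ₁ hQ, coordApprox_eq Q lam τ₂ hQ, ← hs₁, ← hs₂, ← hv₁, ← hv₂,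
    hS1, hS2, ← hR]
  constructor
  · have heq : Q * Matrix.diagonal v₁ * Qᵀ - Q * Matrix.diagonal v₂ * Qᵀ
        = Q * Matrix.diagonal (fun i => v₁ i - v₂ i) * Qᵀ := by
      rw [← Matrix.diagonal_sub, Matrix.mul_sub, Matrix.sub_mul]
    rw [heq]
    exact conj_diag_psd Q _ hpt1
  · have heq : R • (Q * Matrix.diagonal v₂ * Qᵀ) - Q * Matrix.diagonal v₁ * Qᵀ
        = Q * Matrix.diagonal (fun i => R * v₂ i - v₁ i) * Qᵀ := by
      have hfun : (fun i => R * v₂ i - v₁ i) = (fun i => (R • v₂) i - v₁ i) := by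
        funext i; simp [smul_eq_mul]
      rw [hfun, ← Matrix.diagonal_sub, Matrix.diagonal_smul, Matrix.mul_sub,
        Matrix.sub_mul, Matrix.mul_smul, Matrix.smul_mul]
    rw [heq]
    exact conj_diag_psd Q _ hpt2
end

section
/- Let B be an n×n real symmetric positive semidefinite matrix with 1 ≤ τ ≤ Rank(B). Then the τ-coordinate approximation B_τ is positive definite (non-degenerate), and B_τ does not depend on the choice of orthogonal matrix Q in the spectral decomposition of B. -/
open Matrix Finset

/-- Congruence by an orthogonal matrix preserves positive definiteness. -/
lemma posDef_mul_mul_transpose {n : ℕ} {M Q : Matrix (Fin n) (Fin n) ℝ}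
    (hM : M.PosDef) (hQ : Q * Qᵀ = 1) : (Q * M * Qᵀ).PosDef := by
  rw [Matrix.posDef_iff_dotProduct_mulVec]
  constructor
  · have := (hM.posSemidef.mul_mul_conjTranspose_same Q).1
    rwa [Matrix.conjTranspose_eq_transpose_of_trivial] at this
  · intro x hx
    have hx' : Qᵀ *ᵥ x ≠ 0 := by
      intro h
      apply hx
      have : Q *ᵥ (Qᵀ *ᵥ x) = Q *ᵥ 0 := by rw [h]
      rwa [Matrix.mulVec_mulVec, hQ, Matrix.one_mulVec, Matrix.mulVec_zero] at this
    have key : star x ⬝ᵥ (Q * M * Qᵀ) *ᵥ x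
        = star (Qᵀ *ᵥ x) ⬝ᵥ M *ᵥ (Qᵀ *ᵥ x) := by
      rw [show (Q * M * Qᵀ) *ᵥ x = Q *ᵥ (M *ᵥ (Qᵀ *ᵥ x)) by
        simp [Matrix.mulVec_mulVec, Matrix.mul_assoc]]
      rw [Matrix.dotProduct_mulVec, ← Matrix.mulVec_transpose]
      simp [star_trivial]
    rw [key]
    exact hM.dotProduct_mulVec_pos hx'

/-- for 1 ≤ τ ≤ rank B, the τ-coordinate approximation B_τ is positive
definite, and it does not depend on the orthogonal matrix used in the spectral
decomposition of B. -/
theorem coordApprox_posDef_and_wellDefined (n τ : ℕ) (hτ1 : 1 ≤ τ)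
    (B Q Q' : Matrix (Fin n) (Fin n) ℝ) (lam : Fin n → ℝ)
    (hpsd : B.PosSemidef)
    (hQ : Q * Qᵀ = 1) (hQ' : Q' * Q'ᵀ = 1)
    (hmono : ∀ i j : Fin n, i ≤ j → lam j ≤ lam i)
    (hdecomp : B = Q * Matrix.diagonal lam * Qᵀ)
    (hdecomp' : B = Q' * Matrix.diagonal lam * Q'ᵀ)
    (hrank : τ ≤ B.rank) :
    (coordApprox Q lam τ).PosDef ∧ coordApprox Q lam τ = coordApprox Q' lam τ := by
  classical
  have hτn : τ ≤ n := hrank.trans (by simpa using B.rank_le_card_width)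
  have hcn : τ - 1 < n := by omega
  set c : Fin n := ⟨τ - 1, hcn⟩ with hcdef
  have hcval : (c : ℕ) = τ - 1 := rfl
  set d : Fin n → ℝ := fun i => if i.1 < τ then lam i else lam c with hddef
  have hd : (fun i : Fin n =>
      if i.1 < τ then lam i else if h : τ - 1 < n then lam ⟨τ - 1, h⟩ else 0) = d := by
    funext i
    by_cases h : i.1 < τ <;> simp [hddef, h, hcn, hcdef]
  have hQ2 : Qᵀ * Q = 1 := mul_eq_one_comm.mp hQ
  have hQ'2 : Q'ᵀ * Q' = 1 := mul_eq_one_comm.mp hQ'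
  -- diagonal lam is PSD
  have hDlam : (Matrix.diagonal lam).PosSemidef := by
    have heq : Matrix.diagonal lam = Qᵀ * B * Q := by
      rw [hdecomp]
      rw [show Qᵀ * (Q * Matrix.diagonal lam * Qᵀ) * Q
          = Qᵀ * Q * (Matrix.diagonal lam * (Qᵀ * Q)) by simp only [Matrix.mul_assoc]]
      rw [hQ2, Matrix.mul_one, Matrix.one_mul]
    have h1 := hpsd.conjTranspose_mul_mul_same Q
    rwa [Matrix.conjTranspose_eq_transpose_of_trivial, ← heq] at h1
  have hlam0 : ∀ i, 0 ≤ lam i := Matrix.posSemidef_diagonal_iff.mp hDlam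
  -- rank of B equals rank of diagonal lam
  have hudet : IsUnit Q.det := Matrix.isUnit_det_of_right_inverse hQ
  have hQTdet : IsUnit Qᵀ.det := by rwa [Matrix.det_transpose]
  have hrankD : B.rank = (Matrix.diagonal lam).rank := by
    rw [hdecomp, Matrix.rank_mul_eq_left_of_isUnit_det _ _ hQTdet,
      Matrix.rank_mul_eq_right_of_isUnit_det _ _ hudet]
  -- λ_{τ-1} > 0
  have hlamc : 0 < lam c := by
    rcases (hlam0 c).lt_or_eq with h | h
    · exact h
    · exfalso
      have hzero : ∀ i : Fin n, c ≤ i → lam i = 0 := fun i hi =>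
        le_antisymm (by rw [h]; exact hmono c i hi) (hlam0 i)
      have hsub : ∀ i : {i : Fin n // lam i ≠ 0}, (i : Fin n).1 < τ - 1 := by
        intro i
        by_contra hcon
        exact i.2 (hzero i (by rw [Fin.le_def, hcval]; omega))
      have hcard : Fintype.card {i : Fin n // lam i ≠ 0} ≤ τ - 1 := by
        have hinj : Function.Injective
            (fun i : {i : Fin n // lam i ≠ 0} => (⟨(i : Fin n).1, hsub i⟩ : Fin (τ - 1))) := by
          intro a b hab
          ext
          simpa [Fin.ext_iff] using hab
        simpa using Fintype.card_le_of_injective _ hinj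
      have := hrank.trans_eq hrankD
      rw [Matrix.rank_diagonal] at this
      omega
  -- d is pointwise max(lam i, lam c)
  have hdmax : ∀ i : Fin n, d i = max (lam i) (lam c) := by
    intro i
    by_cases h : i.1 < τ
    · have : lam c ≤ lam i := hmono i c (by rw [Fin.le_def, hcval]; omega)
      simp [hddef, h, max_eq_left this]
    · have : lam i ≤ lam c := hmono c i (by rw [Fin.le_def, hcval]; omega)
      simp [hddef, h, max_eq_right this]
  have hdpos : ∀ i, 0 < d i := fun i => by
    rw [hdmax i]; exact lt_max_of_lt_right hlamc
  -- positive definiteness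
  have hs : 0 ≤ ∑ j ∈ Finset.univ.filter (fun j : Fin n => τ ≤ j.1), lam j :=
    Finset.sum_nonneg fun j _ => hlam0 j
  have hs1 : ((∑ j ∈ Finset.univ.filter (fun j : Fin n => τ ≤ j.1), lam j)
      • (1 : Matrix (Fin n) (Fin n) ℝ)).PosSemidef := by
    rw [Matrix.smul_one_eq_diagonal]
    exact Matrix.posSemidef_diagonal_iff.mpr fun _ => hs
  have hposdef : (coordApprox Q lam τ).PosDef := by
    unfold coordApprox
    rw [hd]
    exact (posDef_mul_mul_transpose (Matrix.PosDef.diagonal hdpos) hQ).add_posSemidef hs1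
  refine ⟨hposdef, ?_⟩
  -- well-definedness
  set U : Matrix (Fin n) (Fin n) ℝ := Q'ᵀ * Q with hUdef
  have hUU : U * Uᵀ = 1 := by
    rw [hUdef, Matrix.transpose_mul, Matrix.transpose_transpose]
    rw [show Q'ᵀ * Q * (Qᵀ * Q') = Q'ᵀ * (Q * Qᵀ) * Q' by simp only [Matrix.mul_assoc]]
    rw [hQ, Matrix.mul_one, hQ'2]
  have hBB : Q * Matrix.diagonal lam * Qᵀ = Q' * Matrix.diagonal lam * Q'ᵀ :=
    hdecomp.symm.trans hdecomp'
  have e1 : Q'ᵀ * (Q * Matrix.diagonal lam * Qᵀ) * Q = U * Matrix.diagonal lam := by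
    rw [show Q'ᵀ * (Q * Matrix.diagonal lam * Qᵀ) * Q
        = Q'ᵀ * (Q * (Matrix.diagonal lam * (Qᵀ * Q))) by simp only [Matrix.mul_assoc]]
    rw [hQ2, Matrix.mul_one, hUdef, Matrix.mul_assoc]
  have e2 : Q'ᵀ * (Q' * Matrix.diagonal lam * Q'ᵀ) * Q = Matrix.diagonal lam * U := by
    rw [show Q'ᵀ * (Q' * Matrix.diagonal lam * Q'ᵀ) * Q
        = Q'ᵀ * Q' * (Matrix.diagonal lam * (Q'ᵀ * Q)) by simp only [Matrix.mul_assoc]]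
    rw [hQ'2, Matrix.one_mul, hUdef]
  have hcomm : U * Matrix.diagonal lam = Matrix.diagonal lam * U := by
    rw [← e1, ← e2, hBB]
  have hentry : ∀ i j, U i j * lam j = lam i * U i j := by
    intro i j
    have h0 := Matrix.ext_iff.mpr hcomm i j
    rwa [Matrix.mul_diagonal, Matrix.diagonal_mul] at h0
  have hdcomm : U * Matrix.diagonal d = Matrix.diagonal d * U := by
    ext i j
    rw [Matrix.mul_diagonal, Matrix.diagonal_mul]
    by_cases h : U i j = 0
    · simp [h]
    · have hl : lam i = lam j := by
        have h2 := hentry i j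
        rw [mul_comm (lam i) (U i j)] at h2
        exact (mul_left_cancel₀ h h2).symm
      have : d i = d j := by rw [hdmax i, hdmax j, hl]
      rw [this, mul_comm]
  have hQQ'U : Q = Q' * U := by
    rw [hUdef, ← Matrix.mul_assoc, hQ', Matrix.one_mul]
  have key : Q * Matrix.diagonal d * Qᵀ = Q' * Matrix.diagonal d * Q'ᵀ := by
    rw [hQQ'U, Matrix.transpose_mul]
    have hassoc : Q' * U * Matrix.diagonal d * (Uᵀ * Q'ᵀ)
        = Q' * (U * Matrix.diagonal d * Uᵀ) * Q'ᵀ := by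
      simp only [Matrix.mul_assoc]
    rw [hassoc, hdcomm, Matrix.mul_assoc (Matrix.diagonal d), hUU, Matrix.mul_one]
  unfold coordApprox
  rw [hd, key]
end

section
/- Let f : ℝⁿ → ℝ be differentiable and 1-smooth with respect to the seminorm induced by a real symmetric positive semidefinite matrix B, i.e., f(y) ≤ f(x) + ⟨∇f(x), y−x⟩ + (1/2)‖y−x‖²_B for all x,y. If f is bounded from below, then for every x₀ ∈ ℝⁿ and every subset S ⊆ {1,...,n} with Det(B_{S×S}) = 0, the subvector ∇f(x₀)_S lies in the image of B_{S×S}. -/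
open Matrix Finset

/-- If a real symmetric matrix `M` does not have `u` in the image of `mulVec`, then there is
a vector `q` in the kernel of `M` that is not orthogonal to `u`. -/
lemma key_lemma {k : ℕ} (M : Matrix (Fin k) (Fin k) ℝ) (hM : M.IsHermitian) (u : Fin k → ℝ)
    (hu : ¬ ∃ h, M.mulVec h = u) : ∃ q : Fin k → ℝ, M.mulVec q = 0 ∧ u ⬝ᵥ q ≠ 0 := by
  set T := Matrix.toEuclideanLin M with hT
  set W := LinearMap.range T with hW
  set u' : EuclideanSpace ℝ (Fin k) := (WithLp.equiv 2 (Fin k → ℝ)).symm u with hu'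
  have hunW : u' ∉ W := by
    intro ⟨x, hx⟩
    exact hu ⟨(WithLp.equiv 2 (Fin k → ℝ)) x, by
      have := congrArg (WithLp.equiv 2 (Fin k → ℝ)) hx
      simpa [hT, Matrix.ofLp_toEuclideanLin_apply, hu'] using this⟩
  have hWW : Wᗮᗮ = W := Submodule.orthogonal_orthogonal W
  rw [← hWW] at hunW
  have : ¬ ∀ q ∈ Wᗮ, inner (𝕜 := ℝ) q u' = 0 := fun h => hunW ((Submodule.mem_orthogonal Wᗮ u').mpr h)
  push_neg at this
  obtain ⟨q, hqW, hqu⟩ := this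
  have hsym : (Matrix.toEuclideanLin M).IsSymmetric := (Matrix.isHermitian_iff_isSymmetric).mp hM
  have hTq : T q = 0 := by
    have h1 : inner (𝕜 := ℝ) (T (T q)) q = 0 := hqW _ ⟨T q, rfl⟩
    have h2 : inner (𝕜 := ℝ) (T q) (T q) = 0 := (hsym (T q) q).symm.trans h1
    exact inner_self_eq_zero.mp h2
  refine ⟨(WithLp.equiv 2 (Fin k → ℝ)) q, ?_, ?_⟩
  · have := congrArg (WithLp.equiv 2 (Fin k → ℝ)) hTq
    simpa [hT, Matrix.ofLp_toEuclideanLin_apply] using this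
  · intro h
    apply hqu
    rw [PiLp.inner_apply]
    simpa [dotProduct, hu', WithLp.equiv_symm_apply, PiLp.toLp_apply, mul_comm] using h

/-- if f is differentiable (with gradient g), 1-smooth w.r.t. ‖·‖_B and
bounded below, then for every x₀ and every S with Det(B_{S×S}) = 0 the subvector
∇f(x₀)_S lies in the image of B_{S×S}. -/
theorem grad_sub_mem_image_of_degenerate (n : ℕ)
    (B : Matrix (Fin n) (Fin n) ℝ) (hpsd : B.PosSemidef)
    (f : (Fin n → ℝ) → ℝ) (f' : (Fin n → ℝ) → ((Fin n → ℝ) →L[ℝ] ℝ))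
    (g : (Fin n → ℝ) → (Fin n → ℝ))
    (hderiv : ∀ x, HasFDerivAt f (f' x) x)
    (hgrad : ∀ x v, f' x v = g x ⬝ᵥ v)
    (hsmooth : ∀ x y, f y ≤ f x + g x ⬝ᵥ (y - x) + (1 / 2) * (B.mulVec (y - x) ⬝ᵥ (y - x)))
    (hbdd : ∃ c : ℝ, ∀ x, c ≤ f x)
    (x₀ : Fin n → ℝ) (S : Finset (Fin n))
    (hdeg : (principalSub B S).det = 0) :
    ∃ h : Fin S.card → ℝ,
      (principalSub B S).mulVec h = fun i => g x₀ (S.orderIsoOfFin rfl i).1 := by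
  by_contra hu
  set e := S.orderIsoOfFin rfl with he
  set M := principalSub B S with hMdef
  have hherm : M.IsHermitian := (hpsd.1).submatrix _
  set u : Fin S.card → ℝ := fun a => g x₀ (e a).1 with hudef
  obtain ⟨q, hMq, hq⟩ := key_lemma M hherm u hu
  set w : Fin n → ℝ := fun i => if h : i ∈ S then q (e.symm ⟨i, h⟩) else 0 with hwdef
  have hwe : ∀ a, w ((e a) : Fin n) = q a := by
    intro a
    simp only [hwdef, dif_pos (e a).2]
    congr 1
    rw [show (⟨((e a) : Fin n), (e a).2⟩ : {x // x ∈ S}) = e a from rfl]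
    exact e.symm_apply_apply a
  have hw0 : ∀ i ∉ S, w i = 0 := fun i hi => by simp [hwdef, dif_neg hi]
  have hsum : ∀ F : Fin n → ℝ, ∑ i, F i * w i = ∑ a, F ((e a) : Fin n) * q a := by
    intro F
    rw [← Finset.sum_subset (Finset.subset_univ S)
      (fun i _ hi => by rw [hw0 i hi, mul_zero])]
    rw [← Finset.sum_coe_sort S (fun i => F i * w i)]
    rw [← Equiv.sum_comp e.toEquiv (fun i : {x // x ∈ S} => F i * w i)]
    exact Finset.sum_congr rfl (fun a _ => by rw [show e.toEquiv a = e a from rfl, hwe a])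
  have hgw : g x₀ ⬝ᵥ w = u ⬝ᵥ q := hsum (g x₀)
  have hrow : ∀ a, B.mulVec w ((e a) : Fin n) = 0 := by
    intro a
    have : B.mulVec w ((e a) : Fin n) = ∑ b, B ((e a) : Fin n) ((e b) : Fin n) * q b :=
      hsum (fun j => B ((e a) : Fin n) j)
    rw [this]
    calc ∑ b, B ((e a) : Fin n) ((e b) : Fin n) * q b = M.mulVec q a := rfl
    _ = 0 := congrFun hMq a
  have hBw : B.mulVec w ⬝ᵥ w = 0 := by
    rw [show B.mulVec w ⬝ᵥ w = ∑ i, B.mulVec w i * w i from rfl, hsum (B.mulVec w)]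
    exact Finset.sum_eq_zero fun a _ => by rw [hrow a, zero_mul]
  obtain ⟨c, hc⟩ := hbdd
  set d := u ⬝ᵥ q with hd
  set t : ℝ := (c - f x₀ - 1) / d with ht
  have hkey := hsmooth x₀ (x₀ + t • w)
  rw [add_sub_cancel_left] at hkey
  have h1 : g x₀ ⬝ᵥ (t • w) = t * d := by rw [dotProduct_smul, smul_eq_mul, hgw]
  have h2 : B.mulVec (t • w) ⬝ᵥ (t • w) = 0 := by
    rw [mulVec_smul, smul_dotProduct, dotProduct_smul, hBw]
    simp
  rw [h1, h2] at hkey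
  have htd : t * d = c - f x₀ - 1 := div_mul_cancel₀ _ hq
  have := hc (x₀ + t • w)
  rw [htd] at hkey
  linarith
end

section
/- Let f : ℝⁿ → ℝ be differentiable and 1-smooth with respect to ‖·‖_B for a symmetric positive semidefinite matrix B. Fix x₀ ∈ ℝⁿ and a subset S ⊆ {1,...,n} with B_{S×S} invertible, and let x₁ := x₀ − I_S (B_{S×S})⁻¹ ∇f(x₀)_S. Then f(x₁) ≤ f(x₀) − (1/2)⟨(B_{S×S})⁻¹ ∇f(x₀)_S, ∇f(x₀)_S⟩. -/
open Matrix Finset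

lemma dot_colsId {n : ℕ} (S : Finset (Fin n)) (v : Fin n → ℝ) (h : Fin S.card → ℝ) :
    v ⬝ᵥ (colsId S).mulVec h = ∑ j, v (S.orderIsoOfFin rfl j).1 * h j := by
  simp only [dotProduct, Matrix.mulVec, dotProduct, colsId, Finset.mul_sum,
    ite_mul, one_mul, zero_mul, mul_ite, mul_zero]
  rw [Finset.sum_comm]
  refine Finset.sum_congr rfl fun j _ => ?_
  simp
  exact (Finset.sum_ite_eq' _ _ _).trans (by simp)

/-- sufficient decrease for one coordinate step:
with x₁ = x₀ − I_S (B_{S×S})⁻¹ ∇f(x₀)_S,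
f(x₁) ≤ f(x₀) − (1/2)⟨(B_{S×S})⁻¹ ∇f(x₀)_S, ∇f(x₀)_S⟩. -/
theorem coordinate_step_sufficient_decrease (n : ℕ)
    (B : Matrix (Fin n) (Fin n) ℝ) (hpsd : B.PosSemidef)
    (f : (Fin n → ℝ) → ℝ) (f' : (Fin n → ℝ) → ((Fin n → ℝ) →L[ℝ] ℝ))
    (g : (Fin n → ℝ) → (Fin n → ℝ))
    (hderiv : ∀ x, HasFDerivAt f (f' x) x)
    (hgrad : ∀ x v, f' x v = g x ⬝ᵥ v)
    (hsmooth : ∀ x y, f y ≤ f x + g x ⬝ᵥ (y - x) + (1 / 2) * (B.mulVec (y - x) ⬝ᵥ (y - x)))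
    (x₀ : Fin n → ℝ) (S : Finset (Fin n))
    (hinv : IsUnit (principalSub B S).det) :
    f (x₀ - (colsId S).mulVec
          ((principalSub B S)⁻¹.mulVec (fun i => g x₀ (S.orderIsoOfFin rfl i).1)))
      ≤ f x₀ - (1 / 2) *
          ((principalSub B S)⁻¹.mulVec (fun i => g x₀ (S.orderIsoOfFin rfl i).1) ⬝ᵥ
            (fun i => g x₀ (S.orderIsoOfFin rfl i).1)) := by
  set gS : Fin S.card → ℝ := fun i => g x₀ (S.orderIsoOfFin rfl i).1 with hgS
  set h : Fin S.card → ℝ := (principalSub B S)⁻¹.mulVec gS with hh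
  set d : Fin n → ℝ := (colsId S).mulVec h with hd
  have hL3 : (principalSub B S).mulVec h = gS := by
    rw [hh, Matrix.mulVec_mulVec, Matrix.mul_nonsing_inv _ hinv, Matrix.one_mulVec]
  have key := hsmooth x₀ (x₀ - d)
  have hsub : x₀ - d - x₀ = -d := by abel
  rw [hsub] at key
  have h1 : g x₀ ⬝ᵥ (-d) = -(gS ⬝ᵥ h) := by
    rw [dotProduct_neg, hd, dot_colsId]
    rfl
  have h2 : B.mulVec (-d) ⬝ᵥ (-d) = gS ⬝ᵥ h := by
    rw [Matrix.mulVec_neg, neg_dotProduct, dotProduct_neg, neg_neg, hd]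
    rw [dot_colsId]
    have : ∀ j, B.mulVec ((colsId S).mulVec h) (S.orderIsoOfFin rfl j).1
        = (principalSub B S).mulVec h j := by
      intro j
      show (fun k => B (S.orderIsoOfFin rfl j).1 k) ⬝ᵥ (colsId S).mulVec h = _
      rw [dot_colsId]
      rfl
    calc ∑ j, B.mulVec ((colsId S).mulVec h) (S.orderIsoOfFin rfl j).1 * h j
        = ∑ j, (principalSub B S).mulVec h j * h j := by
          exact Finset.sum_congr rfl fun j _ => by rw [this j]
      _ = gS ⬝ᵥ h := by rw [hL3]; rfl
  rw [h1, h2] at key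
  have hcomm : h ⬝ᵥ gS = gS ⬝ᵥ h := dotProduct_comm _ _
  rw [hcomm]
  linarith
end

section
/- Let B be an n×n real symmetric positive semidefinite matrix whose τ×τ principal submatrices are all invertible, and let S₀ ∼ Vol_τ(B), i.e., Pr(S₀ = S) proportional to Det(B_{S×S}). Then E[I_{S₀} (B_{S₀×S₀})⁻¹ I_{S₀}ᵀ] = Q Diag(σ_{τ−1}(λ₋₁),...,σ_{τ−1}(λ₋ₙ)) Qᵀ / σ_τ(λ), where B = Q Diag(λ) Qᵀ is a spectral decomposition. -/
open Matrix Finset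

section Aux

variable {R : Type*} [CommRing R] {n : ℕ}

/-- The increasing enumeration of `S` as a map `Fin S.card → Fin n`. -/
def embS (S : Finset (Fin n)) : Fin S.card → Fin n :=
  fun p => (S.orderIsoOfFin rfl p : Fin n)

lemma embS_mem (S : Finset (Fin n)) (p : Fin S.card) : embS S p ∈ S :=
  (S.orderIsoOfFin rfl p).2

lemma embS_inj (S : Finset (Fin n)) : Function.Injective (embS S) := by
  intro a b h
  exact (S.orderIsoOfFin rfl).injective (Subtype.ext h)

lemma embS_symm (S : Finset (Fin n)) (i : Fin n) (h : i ∈ S) :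
    embS S ((S.orderIsoOfFin rfl).symm ⟨i, h⟩) = i := by
  simp [embS]

/-- Reindexing equivalence for a subset. -/
noncomputable def eqvS (S : Finset (Fin n)) : Fin S.card ⊕ {a : Fin n // a ∉ S} ≃ Fin n :=
  (Equiv.sumCongr (S.orderIsoOfFin rfl).toEquiv (Equiv.refl _)).trans
    (Equiv.sumCompl (· ∈ S))

lemma eqvS_inl (S : Finset (Fin n)) (p : Fin S.card) : eqvS S (Sum.inl p) = embS S p := rfl

lemma eqvS_inr (S : Finset (Fin n)) (a : {a : Fin n // a ∉ S}) : eqvS S (Sum.inr a) = a.1 := rfl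

/-- det of a matrix that agrees with the identity on rows outside `S`. -/
lemma det_of_id_off (M : Matrix (Fin n) (Fin n) R) (S : Finset (Fin n))
    (h : ∀ a ∉ S, ∀ b, M a b = if a = b then 1 else 0) :
    M.det = (M.submatrix (embS S) (embS S)).det := by
  rw [← Matrix.det_submatrix_equiv_self (eqvS S) M]
  have hM : M.submatrix (eqvS S) (eqvS S) =
      Matrix.fromBlocks (M.submatrix (embS S) (embS S))
        (M.submatrix (embS S) (fun a : {a : Fin n // a ∉ S} => a.1)) 0 1 := by
    ext i j
    cases i with
    | inl i =>
      cases j with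
      | inl j => rfl
      | inr j => rfl
    | inr i =>
      cases j with
      | inl j =>
        have : M i.1 (embS S j) = 0 := by
          rw [h i.1 i.2]
          have : i.1 ≠ embS S j := fun he => i.2 (he ▸ embS_mem S j)
          simp [this]
        simpa [eqvS_inl, eqvS_inr] using this
      | inr j =>
        have : M i.1 j.1 = if i = j then 1 else 0 := by
          rw [h i.1 i.2]
          by_cases hij : i = j
          · simp [hij]
          · have : i.1 ≠ j.1 := fun he => hij (Subtype.ext he)
            simp [hij, this]
        simpa [eqvS_inr, Matrix.one_apply] using this
  rw [hM, Matrix.det_fromBlocks_zero₂₁, Matrix.det_one, mul_one]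

lemma piecewise_rows_det (A : Matrix (Fin n) (Fin n) R)
    (m' : Fin n → Fin n → R) (s : Finset (Fin n)) (c : R) :
    (Matrix.detRowAlternating : (Fin n → R) [⋀^Fin n]→ₗ[R] R)
        (s.piecewise (fun i => c • A i) m')
      = c ^ s.card •
        (Matrix.detRowAlternating : (Fin n → R) [⋀^Fin n]→ₗ[R] R) (s.piecewise A m') := by
  classical
  set m₀ : Fin n → Fin n → R := s.piecewise A m' with hm₀
  have hpw : s.piecewise (fun i => c • A i) m' = s.piecewise (fun i => c • m₀ i) m₀ := by
    funext i
    by_cases hi : i ∈ s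
    · simp [Finset.piecewise_eq_of_mem _ _ _ hi, hm₀, Finset.piecewise, hi]
    · simp [Finset.piecewise_eq_of_notMem _ _ _ hi, hm₀, Finset.piecewise, hi]
  rw [hpw]
  simp only [← AlternatingMap.coe_multilinearMap]
  rw [(Matrix.detRowAlternating : (Fin n → R) [⋀^Fin n]→ₗ[R] R).toMultilinearMap.map_piecewise_smul
      (fun _ => c) m₀ s]
  simp [hm₀]

/-- Expansion of `det (c • A + 1)` as a sum over subsets of principal minors. -/
lemma det_smul_add_one (c : R) (A : Matrix (Fin n) (Fin n) R) :
    (c • A + 1).det = ∑ S : Finset (Fin n), c ^ S.card * (A.submatrix (embS S) (embS S)).det := by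
  classical
  have hrows : (c • A + 1 : Matrix (Fin n) (Fin n) R) =
      ((fun i => c • A i) + (fun i => (1 : Matrix (Fin n) (Fin n) R) i) : Fin n → Fin n → R) := by
    funext i j
    simp [Matrix.add_apply, Matrix.smul_apply]
  have h1 : (c • A + 1).det
      = (Matrix.detRowAlternating : (Fin n → R) [⋀^Fin n]→ₗ[R] R)
          (((fun i => c • A i) + (fun i => (1 : Matrix (Fin n) (Fin n) R) i) : Fin n → Fin n → R)) := by
    rw [← hrows]; rfl
  rw [h1]
  simp only [← AlternatingMap.coe_multilinearMap]
  rw [(Matrix.detRowAlternating : (Fin n → R) [⋀^Fin n]→ₗ[R] R).toMultilinearMap.map_add_univ]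
  refine Finset.sum_congr rfl fun s _ => ?_
  have hpc := piecewise_rows_det A (fun i => (1 : Matrix (Fin n) (Fin n) R) i) s c
  simp only [← AlternatingMap.coe_multilinearMap] at hpc
  rw [hpc]
  have hdet : (Matrix.detRowAlternating : (Fin n → R) [⋀^Fin n]→ₗ[R] R)
      (s.piecewise A fun i => (1 : Matrix (Fin n) (Fin n) R) i)
      = (A.submatrix (embS s) (embS s)).det := by
    have hid : ∀ a ∉ s, ∀ b,
        (Matrix.of (s.piecewise A fun i => (1 : Matrix (Fin n) (Fin n) R) i)) a b
          = if a = b then 1 else 0 := by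
      intro a ha b
      simp [Finset.piecewise_eq_of_notMem _ _ _ ha, Matrix.one_apply, Finset.piecewise, ha]
    have := det_of_id_off (Matrix.of (s.piecewise A fun i => (1 : Matrix (Fin n) (Fin n) R) i)) s hid
    have hsub : (Matrix.of (s.piecewise A fun i => (1 : Matrix (Fin n) (Fin n) R) i)).submatrix
        (embS s) (embS s) = A.submatrix (embS s) (embS s) := by
      ext p q
      simp [Matrix.submatrix_apply, Finset.piecewise_eq_of_mem _ _ _ (embS_mem s p), Finset.piecewise, embS_mem s p]
    rw [hsub] at this
    exact this
  simp only [← AlternatingMap.coe_multilinearMap] at hdet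
  rw [hdet, smul_eq_mul]

/-- Entry of the `S`-principal adjugate, embedded at position `(i,j)`. -/
noncomputable def minorEntry (A : Matrix (Fin n) (Fin n) R) (i j : Fin n)
    (S : Finset (Fin n)) : R :=
  if h : i ∈ S ∧ j ∈ S then
    Matrix.adjugate (A.submatrix (embS S) (embS S))
      ((S.orderIsoOfFin rfl).symm ⟨i, h.1⟩) ((S.orderIsoOfFin rfl).symm ⟨j, h.2⟩)
  else 0

lemma adjugate_smul_add_one (c : R) (A : Matrix (Fin n) (Fin n) R) (i j : Fin n) :
    Matrix.adjugate (c • A + 1) i j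
      = ∑ S : Finset (Fin n), c ^ (S.card - 1) * minorEntry A i j S := by
  classical
  rw [Matrix.adjugate_apply]
  set m : Fin n → Fin n → R := fun r => if r = j then 0 else c • A r with hm
  set m' : Fin n → Fin n → R :=
    fun r => if r = j then Pi.single i 1 else (1 : Matrix (Fin n) (Fin n) R) r with hm'
  have hM : ((c • A + 1 : Matrix (Fin n) (Fin n) R).updateRow j (Pi.single i 1))
      = ((m + m' : Fin n → Fin n → R) : Matrix (Fin n) (Fin n) R) := by
    funext r k
    by_cases hr : r = j
    · subst hr
      simp [Matrix.updateRow_apply, hm, hm', Pi.add_apply]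
    · simp [Matrix.updateRow_apply, hr, hm, hm', Pi.add_apply, Matrix.add_apply,
        Matrix.smul_apply]
  have hdet0 : ((c • A + 1 : Matrix (Fin n) (Fin n) R).updateRow j (Pi.single i 1)).det
      = (Matrix.detRowAlternating : (Fin n → R) [⋀^Fin n]→ₗ[R] R).toMultilinearMap (m + m') := by
    rw [hM]; rfl
  rw [hdet0,
    (Matrix.detRowAlternating : (Fin n → R) [⋀^Fin n]→ₗ[R] R).toMultilinearMap.map_add_univ]
  have hterm : ∀ s : Finset (Fin n),
      (Matrix.detRowAlternating : (Fin n → R) [⋀^Fin n]→ₗ[R] R).toMultilinearMap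
          (s.piecewise m m')
        = if j ∈ s then 0
          else c ^ ((insert j s).card - 1) * minorEntry A i j (insert j s) := by
    intro s
    by_cases hj : j ∈ s
    · rw [if_pos hj]
      refine MultilinearMap.map_coord_zero _ j ?_
      rw [Finset.piecewise_eq_of_mem _ _ _ hj, hm]
      simp
    · rw [if_neg hj]
      set T := insert j s with hT
      have hjT : j ∈ T := Finset.mem_insert_self _ _
      have hcardT : T.card - 1 = s.card := by
        rw [hT, Finset.card_insert_of_notMem hj]
        simp
      -- replace piecewise by the scalable form
      have hpw : s.piecewise m m' = s.piecewise (fun r => c • A r) m' := by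
        funext r
        by_cases hr : r ∈ s
        · have : r ≠ j := fun h => hj (h ▸ hr)
          simp [Finset.piecewise_eq_of_mem _ _ _ hr, hm, this]
        · simp [Finset.piecewise_eq_of_notMem _ _ _ hr, Finset.piecewise, hr]
      rw [hpw]
      have hpc := piecewise_rows_det A m' s c
      simp only [← AlternatingMap.coe_multilinearMap] at hpc
      rw [hpc, hcardT]
      -- now compute det of the piecewise matrix
      set P : Matrix (Fin n) (Fin n) R := Matrix.of (s.piecewise A m') with hP
      have hPdet : (Matrix.detRowAlternating : (Fin n → R) [⋀^Fin n]→ₗ[R] R).toMultilinearMap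
          (s.piecewise A m') = P.det := rfl
      have hPid : ∀ a ∉ T, ∀ b, P a b = if a = b then 1 else 0 := by
        intro a ha b
        have has : a ∉ s := fun h => ha (Finset.mem_insert_of_mem h)
        have haj : a ≠ j := fun h => ha (h ▸ hjT)
        simp [hP, Finset.piecewise_eq_of_notMem _ _ _ has, hm', haj, Matrix.one_apply, Finset.piecewise, has]
      have hPsub := det_of_id_off P T hPid
      rw [hPdet, hPsub]
      by_cases hi : i ∈ T
      · have hij' : i ∈ T ∧ j ∈ T := ⟨hi, hjT⟩
        rw [minorEntry, dif_pos hij']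
        set iT := (T.orderIsoOfFin rfl).symm ⟨i, hi⟩ with hiT
        set jT := (T.orderIsoOfFin rfl).symm ⟨j, hjT⟩ with hjTdef
        have hembj : embS T jT = j := embS_symm T j hjT
        have hembi : embS T iT = i := embS_symm T i hi
        have hsub : P.submatrix (embS T) (embS T)
            = (A.submatrix (embS T) (embS T)).updateRow jT (Pi.single iT 1) := by
          ext p q
          by_cases hp : p = jT
          · subst hp
            rw [Matrix.submatrix_apply, hembj]
            have : P j = Pi.single i 1 := by
              have hjs : j ∉ s := hj
              have h1 : s.piecewise A m' j = m' j := Finset.piecewise_eq_of_notMem _ _ _ hjs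
              have h2 : m' j = Pi.single i 1 := by simp [hm']
              exact h1.trans h2
            rw [this, Matrix.updateRow_self]
            rw [Pi.single_apply, Pi.single_apply]
            congr 1
            simp only [eq_iff_iff]
            constructor
            · intro h
              apply (embS_inj T)
              rw [h, hembi]
            · intro h
              rw [h, hembi]
          · have hpj : embS T p ≠ j := by
              intro h
              exact hp ((embS_inj T) (by rw [h, hembj]))
            have hps : embS T p ∈ s := by
              have hmem : embS T p ∈ insert j s := embS_mem T p
              rcases Finset.mem_insert.mp hmem with h | h
              · exact absurd h hpj
              · exact h
            rw [Matrix.submatrix_apply, Matrix.updateRow_ne hp, Matrix.submatrix_apply]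
            simp [hP, Finset.piecewise_eq_of_mem _ _ _ hps, Finset.piecewise, hps]
        rw [hsub, ← Matrix.adjugate_apply, smul_eq_mul]
      · have hij' : ¬ (i ∈ T ∧ j ∈ T) := fun h => hi h.1
        rw [minorEntry, dif_neg hij']
        have : (P.submatrix (embS T) (embS T)).det = 0 := by
          apply Matrix.det_eq_zero_of_row_eq_zero ((T.orderIsoOfFin rfl).symm ⟨j, hjT⟩)
          intro q
          rw [Matrix.submatrix_apply, embS_symm T j hjT]
          have hjs : j ∉ s := hj
          have : P j = Pi.single i 1 := by
            have h1 : s.piecewise A m' j = m' j := Finset.piecewise_eq_of_notMem _ _ _ hjs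
            have h2 : m' j = Pi.single i 1 := by simp [hm']
            exact h1.trans h2
          rw [this, Pi.single_apply]
          have : embS T q ≠ i := fun h => hi (h ▸ embS_mem T q)
          simp [this]
        rw [this, smul_zero, mul_zero]
  rw [Finset.sum_congr rfl fun s _ => hterm s]
  rw [Finset.sum_ite]
  rw [Finset.sum_const_zero, zero_add]
  have hbij : ∑ s ∈ Finset.univ.filter (fun s : Finset (Fin n) => j ∉ s),
        c ^ ((insert j s).card - 1) * minorEntry A i j (insert j s)
      = ∑ S ∈ Finset.univ.filter (fun S : Finset (Fin n) => j ∈ S),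
        c ^ (S.card - 1) * minorEntry A i j S := by
    refine Finset.sum_bij' (fun s _ => insert j s) (fun S _ => S.erase j) ?_ ?_ ?_ ?_ ?_
    · intro s hs
      simp only [Finset.mem_filter, Finset.mem_univ, true_and] at hs ⊢
      exact Finset.mem_insert_self _ _
    · intro S hS
      simp only [Finset.mem_filter, Finset.mem_univ, true_and] at hS ⊢
      exact Finset.notMem_erase _ _
    · intro s hs
      simp only [Finset.mem_filter, Finset.mem_univ, true_and] at hs
      exact Finset.erase_insert hs
    · intro S hS
      simp only [Finset.mem_filter, Finset.mem_univ, true_and] at hS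
      exact Finset.insert_erase hS
    · intro s hs
      rfl
  rw [hbij]
  apply Finset.sum_subset (Finset.filter_subset _ _)
  intro S _ hS
  simp only [Finset.mem_filter, Finset.mem_univ, true_and] at hS
  have : minorEntry A i j S = 0 := by
    rw [minorEntry, dif_neg (fun h => hS h.2)]
  rw [this, mul_zero]

lemma colsId_mul_mul {n : ℕ} (S : Finset (Fin n)) (M : Matrix (Fin S.card) (Fin S.card) ℝ)
    (i j : Fin n) :
    (colsId S * M * (colsId S)ᵀ) i j
      = if h : i ∈ S ∧ j ∈ S then
          M ((S.orderIsoOfFin rfl).symm ⟨i, h.1⟩) ((S.orderIsoOfFin rfl).symm ⟨j, h.2⟩)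
        else 0 := by
  classical
  rw [Matrix.mul_apply]
  by_cases hij : i ∈ S ∧ j ∈ S
  · rw [dif_pos hij]
    set iT := (S.orderIsoOfFin rfl).symm ⟨i, hij.1⟩ with hiT
    set jT := (S.orderIsoOfFin rfl).symm ⟨j, hij.2⟩ with hjT
    have hi : ∀ p, colsId S i p = if p = iT then 1 else 0 := by
      intro p
      rw [colsId]
      congr 1
      simp only [eq_iff_iff]
      constructor
      · intro h
        apply (S.orderIsoOfFin rfl).injective
        apply Subtype.ext
        rw [← h, hiT]
        simp
      · intro h
        rw [h, hiT]
        simp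
    have hj : ∀ q, (colsId S)ᵀ q j = if q = jT then 1 else 0 := by
      intro q
      rw [Matrix.transpose_apply, colsId]
      congr 1
      simp only [eq_iff_iff]
      constructor
      · intro h
        apply (S.orderIsoOfFin rfl).injective
        apply Subtype.ext
        rw [← h, hjT]
        simp
      · intro h
        rw [h, hjT]
        simp
    have hrow : ∀ q, (colsId S * M) i q = M iT q := by
      intro q
      rw [Matrix.mul_apply]
      rw [Finset.sum_congr rfl fun p _ => by rw [hi p, ite_mul, one_mul, zero_mul]]
      exact Finset.sum_ite_eq' _ _ _ |>.trans (by simp)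
    rw [Finset.sum_congr rfl fun q _ => by rw [hrow q, hj q, mul_ite, mul_one, mul_zero]]
    exact Finset.sum_ite_eq' _ _ _ |>.trans (by simp)
  · rw [dif_neg hij]
    rcases not_and_or.mp hij with hi | hj
    · apply Finset.sum_eq_zero
      intro q _
      rw [Matrix.mul_apply]
      have : ∀ p, colsId S i p = 0 := by
        intro p
        rw [colsId, if_neg]
        intro h
        exact hi (h ▸ (S.orderIsoOfFin rfl p).2)
      simp [this]
    · apply Finset.sum_eq_zero
      intro q _
      have : (colsId S)ᵀ q j = 0 := by
        rw [Matrix.transpose_apply, colsId, if_neg]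
        intro h
        exact hj (h ▸ (S.orderIsoOfFin rfl q).2)
      rw [this, mul_zero]

open Polynomial in
/-- Coefficients of `∏ (X·C(f j) + 1)`. -/
lemma coeff_prod_X_mul_C_add_one {n : ℕ} (f : Fin n → ℝ) (s : Finset (Fin n)) (k : ℕ) :
    (∏ j ∈ s, (X * C (f j) + 1)).coeff k = ∑ t ∈ s.powersetCard k, ∏ j ∈ t, f j := by
  classical
  rw [Finset.prod_add]
  have hterm : ∀ t ∈ s.powerset,
      ((∏ j ∈ t, (X * C (f j))) * ∏ j ∈ s \ t, (1 : ℝ[X]))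
        = C (∏ j ∈ t, f j) * X ^ t.card := by
    intro t _
    rw [Finset.prod_const_one, mul_one, Finset.prod_mul_distrib, Finset.prod_const,
      ← map_prod, mul_comm]
  rw [Finset.sum_congr rfl hterm]
  rw [Polynomial.finset_sum_coeff]
  have hc : ∀ t ∈ s.powerset,
      (C (∏ j ∈ t, f j) * X ^ t.card).coeff k
        = if t.card = k then ∏ j ∈ t, f j else 0 := by
    intro t _
    rw [Polynomial.coeff_C_mul, Polynomial.coeff_X_pow]
    by_cases h : k = t.card
    · rw [if_pos h, if_pos h.symm, mul_one]
    · rw [if_neg h, if_neg (Ne.symm h), mul_zero]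
  rw [Finset.sum_congr rfl hc, Finset.sum_ite, Finset.sum_const_zero, add_zero,
    Finset.powersetCard_eq_filter]

lemma adjugate_conj_orth {m : Type*} [DecidableEq m] [Fintype m]
    (Q M : Matrix m m R) (hQ : Q * Qᵀ = 1) :
    Matrix.adjugate (Q * M * Qᵀ) = Q * Matrix.adjugate M * Qᵀ := by
  have hQQ : Qᵀ * Q = 1 := mul_eq_one_comm.mp hQ
  have hadjQ : Matrix.adjugate Q = Q.det • Qᵀ := by
    calc Matrix.adjugate Q = (Qᵀ * Q) * Matrix.adjugate Q := by rw [hQQ, one_mul]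
      _ = Qᵀ * (Q * Matrix.adjugate Q) := by rw [Matrix.mul_assoc]
      _ = Qᵀ * (Q.det • 1) := by rw [Matrix.mul_adjugate]
      _ = Q.det • Qᵀ := by rw [Matrix.mul_smul, Matrix.mul_one]
  have hadjQT : Matrix.adjugate Qᵀ = Q.det • Q := by
    rw [← Matrix.adjugate_transpose, hadjQ, Matrix.transpose_smul, Matrix.transpose_transpose]
  have hdet : Q.det * Q.det = 1 := by
    have h := congrArg Matrix.det hQ
    rwa [Matrix.det_mul, Matrix.det_transpose, Matrix.det_one] at h
  rw [Matrix.adjugate_mul_distrib, Matrix.adjugate_mul_distrib, hadjQ, hadjQT]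
  simp only [Matrix.smul_mul, Matrix.mul_smul, smul_smul, Matrix.mul_assoc]
  rw [hdet, one_smul]

open Polynomial in
lemma mapC_orth {n : ℕ} (Q : Matrix (Fin n) (Fin n) ℝ) (hQ : Q * Qᵀ = 1) :
    Q.map C * (Q.map C)ᵀ = 1 := by
  rw [← Matrix.transpose_map, ← Matrix.map_mul, hQ, Matrix.map_one _ (map_zero C) (map_one C)]

open Polynomial in
lemma conj_poly {n : ℕ} (B Q : Matrix (Fin n) (Fin n) ℝ) (lam : Fin n → ℝ)
    (hQ : Q * Qᵀ = 1) (hdecomp : B = Q * Matrix.diagonal lam * Qᵀ) :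
    (X : ℝ[X]) • (B.map C) + 1
      = Q.map C * Matrix.diagonal (fun i => X * C (lam i) + 1) * (Q.map C)ᵀ := by
  have hQ' := mapC_orth Q hQ
  have hdiag : Matrix.diagonal (fun i : Fin n => X * C (lam i) + 1)
      = (X : ℝ[X]) • (Matrix.diagonal lam).map C + 1 := by
    ext a b
    by_cases hab : a = b
    · subst hab
      simp [Matrix.diagonal_apply_eq, Matrix.one_apply_eq, smul_eq_mul]
    · simp [Matrix.diagonal_apply_ne _ hab, Matrix.one_apply_ne hab]
  rw [hdiag, Matrix.mul_add, Matrix.add_mul, Matrix.mul_one, hQ', Matrix.mul_smul,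
    Matrix.smul_mul]
  congr 2
  rw [hdecomp, Matrix.map_mul, Matrix.map_mul, Matrix.transpose_map]

open Polynomial in
lemma key_det {n : ℕ} (τ : ℕ) (B Q : Matrix (Fin n) (Fin n) ℝ) (lam : Fin n → ℝ)
    (hQ : Q * Qᵀ = 1) (hdecomp : B = Q * Matrix.diagonal lam * Qᵀ) :
    ∑ S ∈ Finset.univ.powersetCard τ, (principalSub B S).det
      = ∑ S ∈ Finset.univ.powersetCard τ, ∏ j ∈ S, lam j := by
  classical
  have h1 : ((X : ℝ[X]) • (B.map C) + 1).det
      = ∑ S : Finset (Fin n), (X : ℝ[X]) ^ S.card * C ((principalSub B S).det) := by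
    rw [det_smul_add_one]
    refine Finset.sum_congr rfl fun S _ => ?_
    congr 1
    rw [show (B.map C).submatrix (embS S) (embS S) = (principalSub B S).map C from rfl]
    rw [show ((principalSub B S).map (⇑C)).det = (C.mapMatrix (principalSub B S)).det from by
      rw [RingHom.mapMatrix_apply], ← RingHom.map_det]
  have h2 : ((X : ℝ[X]) • (B.map C) + 1).det = ∏ i : Fin n, (X * C (lam i) + 1) := by
    rw [conj_poly B Q lam hQ hdecomp, Matrix.det_mul, Matrix.det_mul, mul_right_comm,
      ← Matrix.det_mul, mapC_orth Q hQ, Matrix.det_one, one_mul, Matrix.det_diagonal]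
  have hco := congrArg (fun p : ℝ[X] => p.coeff τ) (h1.symm.trans h2)
  rw [coeff_prod_X_mul_C_add_one lam Finset.univ τ] at hco
  rw [Polynomial.finset_sum_coeff] at hco
  rw [← hco]
  have hc : ∀ S : Finset (Fin n),
      ((X : ℝ[X]) ^ S.card * C ((principalSub B S).det)).coeff τ
        = if S.card = τ then (principalSub B S).det else 0 := by
    intro S
    rw [mul_comm, Polynomial.coeff_C_mul, Polynomial.coeff_X_pow]
    by_cases h : τ = S.card
    · rw [if_pos h, if_pos h.symm, mul_one]
    · rw [if_neg h, if_neg (Ne.symm h), mul_zero]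
  rw [Finset.sum_congr rfl fun S _ => hc S, Finset.sum_ite, Finset.sum_const_zero, add_zero,
    Finset.powersetCard_eq_filter, Finset.powerset_univ]

open Polynomial in
lemma minorEntry_map {n : ℕ} (B : Matrix (Fin n) (Fin n) ℝ) (i j : Fin n) (S : Finset (Fin n)) :
    minorEntry (B.map C) i j S = C (minorEntry B i j S) := by
  rw [minorEntry, minorEntry]
  split_ifs with h
  · rw [show (B.map C).submatrix (embS S) (embS S)
        = C.mapMatrix (B.submatrix (embS S) (embS S)) from by rw [RingHom.mapMatrix_apply]; rfl]
    rw [← RingHom.map_adjugate]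
    rw [RingHom.mapMatrix_apply, Matrix.map_apply]
  · rw [map_zero]

open Polynomial in
lemma coeff_conj_entry {n : ℕ} (Q : Matrix (Fin n) (Fin n) ℝ) (p : Fin n → ℝ[X]) (k : ℕ)
    (a b : Fin n) :
    ((Q.map C * Matrix.diagonal p * (Q.map C)ᵀ) a b).coeff k
      = (Q * Matrix.diagonal (fun i => (p i).coeff k) * Qᵀ) a b := by
  rw [Matrix.mul_assoc, Matrix.mul_assoc, Matrix.mul_apply, Matrix.mul_apply,
    Polynomial.finset_sum_coeff]
  refine Finset.sum_congr rfl fun i _ => ?_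
  rw [Matrix.diagonal_mul, Matrix.diagonal_mul, Matrix.map_apply, Matrix.transpose_apply,
    Matrix.transpose_apply, Matrix.map_apply, Polynomial.coeff_C_mul, Polynomial.coeff_mul_C]

open Polynomial in
lemma key_adj {n : ℕ} (τ : ℕ) (hτ1 : 1 ≤ τ) (B Q : Matrix (Fin n) (Fin n) ℝ) (lam : Fin n → ℝ)
    (hQ : Q * Qᵀ = 1) (hdecomp : B = Q * Matrix.diagonal lam * Qᵀ) :
    ∑ S ∈ Finset.univ.powersetCard τ, colsId S * (principalSub B S).adjugate * (colsId S)ᵀ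
      = Q * Matrix.diagonal (fun i : Fin n =>
          ∑ T ∈ (Finset.univ.erase i).powersetCard (τ - 1), ∏ j ∈ T, lam j) * Qᵀ := by
  classical
  ext a b
  rw [Matrix.sum_apply]
  have hentry : ∀ S ∈ Finset.univ.powersetCard τ,
      (colsId S * (principalSub B S).adjugate * (colsId S)ᵀ) a b = minorEntry B a b S := by
    intro S _
    rw [colsId_mul_mul]
    rfl
  rw [Finset.sum_congr rfl hentry]
  have hL := adjugate_smul_add_one (X : ℝ[X]) (B.map C) a b
  have hR : Matrix.adjugate ((X : ℝ[X]) • (B.map C) + 1)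
      = Q.map C * Matrix.diagonal (fun i : Fin n =>
          ∏ j ∈ Finset.univ.erase i, (X * C (lam j) + 1)) * (Q.map C)ᵀ := by
    rw [conj_poly B Q lam hQ hdecomp, adjugate_conj_orth _ _ (mapC_orth Q hQ),
      Matrix.adjugate_diagonal]
  have hent := hL.symm.trans (congrArg (fun M => M a b) hR)
  have hco := congrArg (fun p : ℝ[X] => p.coeff (τ - 1)) hent
  rw [coeff_conj_entry, Polynomial.finset_sum_coeff] at hco
  have hc : ∀ S : Finset (Fin n),
      ((X : ℝ[X]) ^ (S.card - 1) * minorEntry (B.map C) a b S).coeff (τ - 1)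
        = if τ - 1 = S.card - 1 then minorEntry B a b S else 0 := by
    intro S
    rw [minorEntry_map, mul_comm, Polynomial.coeff_C_mul, Polynomial.coeff_X_pow]
    by_cases h : τ - 1 = S.card - 1
    · rw [if_pos h, if_pos h, mul_one]
    · rw [if_neg h, if_neg h, mul_zero]
  rw [Finset.sum_congr rfl fun S _ => hc S] at hco
  have hmass : ∑ S : Finset (Fin n), (if τ - 1 = S.card - 1 then minorEntry B a b S else 0)
      = ∑ S ∈ Finset.univ.powersetCard τ, minorEntry B a b S := by
    rw [Finset.powersetCard_eq_filter, Finset.powerset_univ, Finset.sum_filter]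
    refine Finset.sum_congr rfl fun S _ => ?_
    by_cases hcard : S.card = τ
    · rw [if_pos (by rw [hcard]), if_pos hcard]
    · rw [if_neg hcard]
      by_cases hc2 : τ - 1 = S.card - 1
      · rw [if_pos hc2]
        have hS0 : S.card = 0 := by
          by_contra h0
          have h1 : 1 ≤ S.card := Nat.one_le_iff_ne_zero.mpr h0
          exact hcard (by omega)
        have hSe : S = ∅ := Finset.card_eq_zero.mp hS0
        subst hSe
        rw [minorEntry, dif_neg]
        intro h
        exact absurd h.1 (Finset.notMem_empty a)
      · rw [if_neg hc2]
  rw [← hmass, hco]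
  have hfun : (fun i : Fin n =>
        (∏ j ∈ Finset.univ.erase i, (X * C (lam j) + 1)).coeff (τ - 1))
      = fun i : Fin n => ∑ T ∈ (Finset.univ.erase i).powersetCard (τ - 1), ∏ j ∈ T, lam j :=
    funext fun i => coeff_prod_X_mul_C_add_one lam _ (τ - 1)
  rw [hfun]

end Aux

/-- for volume sampling S₀ ∼ Vol_τ(B) (probabilities proportional to
Det(B_{S×S})), the expectation of I_{S₀}(B_{S₀×S₀})⁻¹I_{S₀}ᵀ equals
Q Diag(σ_{τ-1}(λ₋₁),…,σ_{τ-1}(λ₋ₙ)) Qᵀ / σ_τ(λ). -/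
theorem expectation_volume_sampling (n τ : ℕ) (hτ1 : 1 ≤ τ) (hτn : τ ≤ n)
    (B Q : Matrix (Fin n) (Fin n) ℝ) (lam : Fin n → ℝ)
    (hpsd : B.PosSemidef) (hQ : Q * Qᵀ = 1)
    (hmono : ∀ i j : Fin n, i ≤ j → lam j ≤ lam i)
    (hdecomp : B = Q * Matrix.diagonal lam * Qᵀ)
    (hinv : ∀ S ∈ Finset.univ.powersetCard τ, IsUnit (principalSub B S).det) :
    ∑ S ∈ Finset.univ.powersetCard τ,
        ((principalSub B S).det /
            (∑ S' ∈ Finset.univ.powersetCard τ, (principalSub B S').det)) •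
          (colsId S * (principalSub B S)⁻¹ * (colsId S)ᵀ)
      = (∑ S ∈ Finset.univ.powersetCard τ, ∏ j ∈ S, lam j)⁻¹ •
          (Q * Matrix.diagonal (fun i : Fin n =>
            ∑ T ∈ (Finset.univ.erase i).powersetCard (τ - 1), ∏ j ∈ T, lam j) * Qᵀ) := by
  classical
  set E := ∑ S' ∈ Finset.univ.powersetCard τ, (principalSub B S').det with hE
  have hLHS : ∑ S ∈ Finset.univ.powersetCard τ,
      ((principalSub B S).det / E) • (colsId S * (principalSub B S)⁻¹ * (colsId S)ᵀ)
      = E⁻¹ • ∑ S ∈ Finset.univ.powersetCard τ,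
          colsId S * (principalSub B S).adjugate * (colsId S)ᵀ := by
    rw [Finset.smul_sum]
    refine Finset.sum_congr rfl fun S hS => ?_
    have hu := hinv S hS
    have hd0 : (principalSub B S).det ≠ 0 := by
      simpa [isUnit_iff_ne_zero] using hu
    rw [Matrix.inv_def, Ring.inverse_eq_inv']
    rw [Matrix.mul_smul, Matrix.smul_mul, smul_smul]
    congr 1
    rw [div_mul_eq_mul_div, mul_inv_cancel₀ hd0, one_div]
  rw [hLHS, key_adj τ hτ1 B Q lam hQ hdecomp, hE, key_det τ B Q lam hQ hdecomp]
end

section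
/- Let B be an n×n (n ≥ 2) real symmetric invertible matrix with all (n−1)×(n−1) principal submatrices invertible, and let C := B⁻¹ with columns c₁,...,cₙ. Then for every 1 ≤ i ≤ n, Det(B) · (C_{ii} · C_{−i×−i} − (c_i)_{−i} (c_i)_{−i}ᵀ) = Adj(B_{−i×−i}), where the subscript −i denotes removal of the i-th row/column (or entry). -/
open Matrix

/-- for symmetric invertible B (dimension n+1 ≥ 2) with all
(n)×(n) principal submatrices invertible, and C = B⁻¹ with columns cᵢ,
Det(B)·(Cᵢᵢ·C₋ᵢ,₋ᵢ − (cᵢ)₋ᵢ(cᵢ)₋ᵢᵀ) = Adj(B₋ᵢ,₋ᵢ). -/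
theorem det_smul_schur_eq_adjugate (n : ℕ) (hn : 1 ≤ n)
    (B : Matrix (Fin (n + 1)) (Fin (n + 1)) ℝ) (hsymm : B.IsSymm)
    (hB : IsUnit B.det)
    (hsub : ∀ i : Fin (n + 1), IsUnit (B.submatrix i.succAbove i.succAbove).det)
    (i : Fin (n + 1)) :
    B.det •
      ((B⁻¹ i i) • (B⁻¹.submatrix i.succAbove i.succAbove) -
        Matrix.vecMulVec (fun j => B⁻¹ (i.succAbove j) i) (fun j => B⁻¹ (i.succAbove j) i))
      = (B.submatrix i.succAbove i.succAbove).adjugate := by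
  set A := B.submatrix i.succAbove i.succAbove with hA
  set C := B⁻¹ with hC
  have hCB : C * B = 1 := nonsing_inv_mul B hB
  have hCsymm : Cᵀ = C := by
    rw [hC, transpose_nonsing_inv, hsymm.eq]
  have hCsymm' : ∀ a b, C a b = C b a := fun a b => by
    have h2 := congrFun (congrFun hCsymm b) a
    simpa [Matrix.transpose_apply] using h2
  have hdiag : B.det * C i i = A.det := by
    rw [hC, Matrix.inv_def, Matrix.smul_apply, adjugate_fin_succ_eq_det_submatrix, ← hA]
    have hneg : ((-1 : ℝ)) ^ ((i : ℕ) + i) = 1 := by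
      rw [← two_mul, pow_mul, neg_one_sq, one_pow]
    rw [hneg, one_mul, smul_eq_mul, ← mul_assoc, Ring.mul_inverse_cancel _ hB, one_mul]
  have key1 : ∀ j l, (∑ k, C (i.succAbove j) (i.succAbove k) * A k l)
      = (if j = l then (1:ℝ) else 0) - C (i.succAbove j) i * B i (i.succAbove l) := by
    intro j l
    have h := congrArg (fun M => M (i.succAbove j) (i.succAbove l)) hCB
    simp only [Matrix.mul_apply, Matrix.one_apply] at h
    rw [Fin.sum_univ_succAbove (fun k => C (i.succAbove j) k * B k (i.succAbove l)) i] at h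
    simp only [Fin.succAbove_right_inj] at h
    simp only [hA, Matrix.submatrix_apply]
    linarith [h]
  have key2 : ∀ l, (∑ m, C (i.succAbove m) i * A m l)
      = - C i i * B i (i.succAbove l) := by
    intro l
    have h := congrArg (fun M => M i (i.succAbove l)) hCB
    simp only [Matrix.mul_apply, Matrix.one_apply] at h
    rw [Fin.sum_univ_succAbove (fun k => C i k * B k (i.succAbove l)) i,
      if_neg (Fin.succAbove_ne i l).symm] at h
    simp only [hA, Matrix.submatrix_apply]
    calc (∑ m, C (i.succAbove m) i * B (i.succAbove m) (i.succAbove l))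
        = ∑ m, C i (i.succAbove m) * B (i.succAbove m) (i.succAbove l) := by
          simp_rw [hCsymm' i]
      _ = - C i i * B i (i.succAbove l) := by linarith [h]
  have hmul : (B.det •
      ((C i i) • (C.submatrix i.succAbove i.succAbove) -
        Matrix.vecMulVec (fun j => C (i.succAbove j) i) (fun j => C (i.succAbove j) i))) * A
      = A.adjugate * A := by
    rw [Matrix.adjugate_mul]
    ext j l
    simp only [Matrix.mul_apply, Matrix.smul_apply, Matrix.sub_apply, Matrix.vecMulVec_apply,
      Matrix.submatrix_apply, smul_eq_mul, Matrix.one_apply]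
    have e1 : ∑ k, (B.det * (C i i * C (i.succAbove j) (i.succAbove k) -
        C (i.succAbove j) i * C (i.succAbove k) i)) * A k l
        = B.det * (C i i * (∑ k, C (i.succAbove j) (i.succAbove k) * A k l)
          - C (i.succAbove j) i * (∑ k, C (i.succAbove k) i * A k l)) := by
      simp only [mul_sub, Finset.mul_sum, ← Finset.sum_sub_distrib]
      exact Finset.sum_congr rfl fun k _ => by ring
    rw [e1, key1, key2]
    rw [show C i i * ((if j = l then (1:ℝ) else 0) - C (i.succAbove j) i * B i (i.succAbove l))
        - C (i.succAbove j) i * (- C i i * B i (i.succAbove l))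
        = C i i * (if j = l then (1:ℝ) else 0) by ring]
    rw [← mul_assoc, hdiag]
  have := congrArg (fun M => M * A⁻¹) hmul
  simpa only [Matrix.mul_nonsing_inv_cancel_right A _ (hsub i)] using this
end
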